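/- arXiv:2510.05915 — 5 statements merged into one kernel-verified Lean document; each statement's English description precedes it below -/
import Mathlib

section
/- Let G be a graph with connected components G_1,...,G_t. Then the analytic spread of the binomial edge ideal satisfies ℓ(J_G) = ℓ(J_{G_1}) + ... + ℓ(J_{G_t}). -/
open MvPolynomial

/-- Transcendence degree of `L` over `K`: the supremum of cardinalities of
algebraically independent subsets. -/
noncomputable def trdeg (K : Type*) (L : Type*) [CommRing K] [CommRing L] [Algebra K L] :
    Cardinal :=
  ⨆ s : {s : Set L // AlgebraicIndependent K ((↑) : s → L)}, Cardinal.mk s.1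

/-- The edge binomials of a graph, viewed inside the fraction field of
`K[x_v, y_v : v ∈ V]` (the `Sum.inl` variables are the `x`s, `Sum.inr` the `y`s). -/
noncomputable def edgeBinoms (K : Type) [Field K] {V : Type} (G : SimpleGraph V) :
    Set (FractionRing (MvPolynomial (V ⊕ V) K)) :=
  {z | ∃ i j, G.Adj i j ∧
    z = algebraMap (MvPolynomial (V ⊕ V) K) (FractionRing (MvPolynomial (V ⊕ V) K))
      (X (Sum.inl i) * X (Sum.inr j) - X (Sum.inl j) * X (Sum.inr i))}

/-- The analytic spread of the binomial edge ideal `J_G`: the transcendence degree over `K`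
of the subfield generated by the edge binomials. -/
noncomputable def spread (K : Type) [Field K] {V : Type} (G : SimpleGraph V) : Cardinal :=
  trdeg K (IntermediateField.adjoin K (edgeBinoms K G))

/-- The connected component `c` of `G`, as a subgraph of `G` on the same vertex set
(all the edges of `G` between vertices of `c`). -/
def compSubgraph {V : Type} (G : SimpleGraph V) (c : G.ConnectedComponent) :
    SimpleGraph V where
  Adj i j := G.Adj i j ∧ G.connectedComponentMk i = c
  symm := by
    constructor
    intro i j ⟨hadj, hc⟩
    exact ⟨hadj.symm, by rw [SimpleGraph.ConnectedComponent.sound hadj.symm.reachable]; exact hc⟩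
  loopless := ⟨fun i h => G.irrefl h.1⟩


open Function

namespace BEI

section CLR

variable {A M L : Type*} [CommRing A] [Field M] [CommRing L] [Nontrivial L] {ι : Type*}

/-- Clearing denominators: if evaluation with coefficients from `A` is injective and every
element of `M` is a ratio of `θ`-images, then evaluation with coefficients from `M`
is injective. -/
theorem clr (θ : A →+* M) (η : M →+* L) (g : ι → L)
    (hfrac : ∀ m : M, ∃ a b : A, θ b ≠ 0 ∧ m = θ a / θ b)
    (hinj : Injective (MvPolynomial.eval₂Hom (η.comp θ) g)) :
    Injective (MvPolynomial.eval₂Hom η g) := by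
  classical
  rw [injective_iff_map_eq_zero] at hinj ⊢
  intro p hp
  by_contra hne
  choose num den hden hm using hfrac
  set q : MvPolynomial ι A := ∑ s ∈ p.support,
    MvPolynomial.monomial s (num (p.coeff s) * ∏ s' ∈ p.support.erase s, den (p.coeff s'))
    with hq
  set c : M := ∏ s ∈ p.support, θ (den (p.coeff s)) with hc
  have hcne : c ≠ 0 := Finset.prod_ne_zero_iff.2 fun s _ => hden _
  have hcoeffq : ∀ u, q.coeff u = if u ∈ p.support then
      num (p.coeff u) * ∏ s' ∈ p.support.erase u, den (p.coeff s') else 0 := by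
    intro u
    rw [hq, MvPolynomial.coeff_sum]
    by_cases hu : u ∈ p.support
    · rw [if_pos hu, Finset.sum_eq_single u
        (fun s _ hsu => by rw [MvPolynomial.coeff_monomial, if_neg hsu])
        (fun h => absurd hu h)]
      rw [MvPolynomial.coeff_monomial, if_pos rfl]
    · rw [if_neg hu]
      exact Finset.sum_eq_zero fun s hs => by
        rw [MvPolynomial.coeff_monomial, if_neg]
        rintro rfl; exact hu hs
  have hmapq : MvPolynomial.map θ q = MvPolynomial.C c * p := by
    ext u
    rw [MvPolynomial.coeff_map, MvPolynomial.coeff_C_mul, hcoeffq]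
    by_cases hu : u ∈ p.support
    · rw [if_pos hu, map_mul, map_prod]
      have hbne : θ (den (p.coeff u)) ≠ 0 := hden _
      have hsplit : c = θ (den (p.coeff u)) * ∏ s' ∈ p.support.erase u, θ (den (p.coeff s')) :=
        (Finset.mul_prod_erase _ _ hu).symm
      have key := hm (p.coeff u)
      set b := den (p.coeff u) with hb
      set a := num (p.coeff u) with ha
      rw [hsplit, key]
      field_simp
    · rw [if_neg hu, MvPolynomial.notMem_support_iff.1 hu, map_zero, mul_zero]
  have heval : MvPolynomial.eval₂Hom (η.comp θ) g q = 0 := by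
    have h1 : MvPolynomial.eval₂ η g (MvPolynomial.map θ q)
        = MvPolynomial.eval₂ (η.comp θ) g q := MvPolynomial.eval₂_map θ g η q
    have h2 : MvPolynomial.eval₂ η g (MvPolynomial.C c * p) = η c * MvPolynomial.eval₂ η g p := by
      rw [MvPolynomial.eval₂_mul, MvPolynomial.eval₂_C]
    show MvPolynomial.eval₂ (η.comp θ) g q = 0
    rw [← h1, hmapq, h2]
    have : MvPolynomial.eval₂ η g p = 0 := hp
    rw [this, mul_zero]
  have hq0 : q = 0 := hinj q heval
  rw [hq0, map_zero] at hmapq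
  rcases mul_eq_zero.1 hmapq.symm with h | h
  · exact hcne (by simpa using (MvPolynomial.C_eq_zero.mp h))
  · exact hne h

end CLR

section Curry

variable {K' L : Type*} [CommSemiring K'] [CommSemiring L] [Algebra K' L]
variable {ι κ : Type*}

theorem curry_eq (y : ι → L) (g : κ → L) :
    (MvPolynomial.eval₂Hom
        ((MvPolynomial.aeval y : MvPolynomial ι K' →ₐ[K'] L) : MvPolynomial ι K' →+* L) g)
      = ((MvPolynomial.aeval (Sum.elim g y) : MvPolynomial (κ ⊕ ι) K' →ₐ[K'] L) :
            MvPolynomial (κ ⊕ ι) K' →+* L).comp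
          (MvPolynomial.iterToSum K' κ ι) := by
  apply MvPolynomial.ringHom_ext
  · intro r
    have : ∀ r : MvPolynomial ι K',
        MvPolynomial.aeval y r
          = MvPolynomial.aeval (Sum.elim g y) (MvPolynomial.iterToSum K' κ ι (MvPolynomial.C r)) := by
      intro r
      have hhom : ((MvPolynomial.aeval (Sum.elim g y) : MvPolynomial (κ ⊕ ι) K' →ₐ[K'] L) :
            MvPolynomial (κ ⊕ ι) K' →+* L).comp
            ((MvPolynomial.iterToSum K' κ ι).comp (MvPolynomial.C))
          = ((MvPolynomial.aeval y : MvPolynomial ι K' →ₐ[K'] L) : MvPolynomial ι K' →+* L) := by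
        apply MvPolynomial.ringHom_ext
        · intro a
          simp [MvPolynomial.iterToSum_C_C]
        · intro i
          simp [MvPolynomial.iterToSum_C_X]
      exact (RingHom.congr_fun hhom r).symm
    simpa using this r
  · intro k
    simp [MvPolynomial.iterToSum_X]

theorem iterToSum_injective :
    Injective (MvPolynomial.iterToSum K' κ ι) := by
  have h : ⇑(MvPolynomial.sumRingEquiv K' κ ι).symm = ⇑(MvPolynomial.iterToSum K' κ ι) := by
    have : ((MvPolynomial.sumRingEquiv K' κ ι).symm : _ →+* _) = MvPolynomial.iterToSum K' κ ι := by
      apply MvPolynomial.ringHom_ext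
      · intro r
        show (MvPolynomial.sumRingEquiv K' κ ι).symm (MvPolynomial.C r)
          = MvPolynomial.iterToSum K' κ ι (MvPolynomial.C r)
        refine MvPolynomial.induction_on (motive := fun r => (MvPolynomial.sumRingEquiv K' κ ι).symm
          (MvPolynomial.C r) = MvPolynomial.iterToSum K' κ ι (MvPolynomial.C r)) r ?_ ?_ ?_
        · intro a; simp [MvPolynomial.iterToSum_C_C]
        · intro p q hp hq; simp only [map_add]; rw [hp, hq]
        · intro p s hp; simp only [map_mul]; rw [hp]; simp [MvPolynomial.iterToSum_C_X]
      · intro s; simp [MvPolynomial.iterToSum_X]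
    rw [← this]; rfl
  rw [← h]
  exact (MvPolynomial.sumRingEquiv K' κ ι).symm.injective

theorem curry_inj (y : ι → L) (g : κ → L)
    (h : Injective (MvPolynomial.aeval (R := K') (Sum.elim g y))) :
    Injective (MvPolynomial.eval₂Hom
        ((MvPolynomial.aeval y : MvPolynomial ι K' →ₐ[K'] L) : MvPolynomial ι K' →+* L) g) := by
  rw [curry_eq]
  exact h.comp iterToSum_injective

end Curry

end BEI


open Function

namespace BEI2
open BEI

section Transfer

/-- Transfer algebraicity along a compatible injective ring hom of coefficient rings. -/
theorem isAlgebraic_of_compat {A B L : Type*} [CommRing A] [CommRing B] [CommRing L]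
    [Algebra A L] [Algebra B L] (f : A →+* B) (hf : Injective f)
    (hcomp : (algebraMap B L).comp f = algebraMap A L) {x : L}
    (h : IsAlgebraic A x) : IsAlgebraic B x := by
  obtain ⟨p, hp, he⟩ := h
  refine ⟨p.map f, fun h0 => hp ((Polynomial.map_eq_zero_iff hf).1 h0), ?_⟩
  have : (Polynomial.aeval x) (p.map f) = Polynomial.eval₂ ((algebraMap B L).comp f) x p := by
    rw [Polynomial.aeval_def, Polynomial.eval₂_map]
  rw [this, hcomp]
  exact he

/-- Inclusion of intermediate fields over possibly different base fields. -/
def ifInc {K₁ K₂ L : Type*} [Field K₁] [Field K₂] [Field L] [Algebra K₁ L] [Algebra K₂ L]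
    (P : IntermediateField K₁ L) (Q : IntermediateField K₂ L) (h : ∀ x ∈ P, x ∈ Q) :
    ↥P →+* ↥Q where
  toFun x := ⟨x.1, h x.1 x.2⟩
  map_one' := rfl
  map_mul' _ _ := rfl
  map_zero' := rfl
  map_add' _ _ := rfl

theorem ifInc_injective {K₁ K₂ L : Type*} [Field K₁] [Field K₂] [Field L]
    [Algebra K₁ L] [Algebra K₂ L]
    (P : IntermediateField K₁ L) (Q : IntermediateField K₂ L) (h : ∀ x ∈ P, x ∈ Q) :
    Injective (ifInc P Q h) := by
  intro a b hab
  have h2 := congrArg Subtype.val hab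
  exact Subtype.ext h2

theorem isAlgebraic_mono {K₁ K₂ L : Type*} [Field K₁] [Field K₂] [Field L]
    [Algebra K₁ L] [Algebra K₂ L]
    {P : IntermediateField K₁ L} {Q : IntermediateField K₂ L} (h : ∀ x ∈ P, x ∈ Q) {x : L}
    (halg : IsAlgebraic (↥P) x) : IsAlgebraic (↥Q) x :=
  isAlgebraic_of_compat (L := L) (ifInc P Q h) (ifInc_injective P Q h)
    (RingHom.ext fun _ => rfl) halg

/-- Inclusion of a subalgebra into an intermediate field. -/
def saInc {K L : Type*} [Field K] [Field L] [Algebra K L]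
    (P : Subalgebra K L) (Q : IntermediateField K L) (h : ∀ x ∈ P, x ∈ Q) :
    ↥P →+* ↥Q where
  toFun x := ⟨x.1, h x.1 x.2⟩
  map_one' := rfl
  map_mul' _ _ := rfl
  map_zero' := rfl
  map_add' _ _ := rfl

theorem isAlgebraic_of_subalgebra {K L : Type*} [Field K] [Field L] [Algebra K L]
    {P : Subalgebra K L} {Q : IntermediateField K L} (h : ∀ x ∈ P, x ∈ Q) {x : L}
    (halg : IsAlgebraic (↥P) x) : IsAlgebraic (↥Q) x :=
  isAlgebraic_of_compat (L := L) (saInc P Q h)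
    (fun a b hab => Subtype.ext (congrArg Subtype.val hab : _))
    (RingHom.ext fun _ => rfl) halg

theorem isAlgebraic_bot_down {K L : Type*} [Field K] [Field L] [Algebra K L] {x : L}
    (h : IsAlgebraic (↥(⊥ : IntermediateField K L)) x) : IsAlgebraic K x := by
  have key : ∀ a : (⊥ : IntermediateField K L),
      algebraMap K L ((IntermediateField.botEquiv K L) a) = algebraMap _ L a := by
    intro a
    obtain ⟨k, hk⟩ := (IntermediateField.botEquiv K L).symm.surjective a
    rw [← hk, AlgEquiv.apply_symm_apply, IntermediateField.botEquiv_symm]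
    exact IsScalarTower.algebraMap_apply K _ L k
  exact isAlgebraic_of_compat (L := L)
    ((IntermediateField.botEquiv K L).toAlgHom.toRingHom)
    (IntermediateField.botEquiv K L).injective (RingHom.ext fun a => key a) h

end Transfer

section Frac

variable {K' L : Type*} [Field K'] [Field L] [Algebra K' L] {ι : Type*}

/-- The canonical ring hom from polynomials to the intermediate field generated by a family. -/
noncomputable def toAdjoin (y : ι → L) :
    MvPolynomial ι K' →+* ↥(IntermediateField.adjoin K' (Set.range y)) where
  toFun p := ⟨MvPolynomial.aeval y p, by
    have h1 : MvPolynomial.aeval y p ∈ Algebra.adjoin K' (Set.range y) := by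
      rw [Algebra.adjoin_range_eq_range_aeval]
      exact ⟨p, rfl⟩
    exact IntermediateField.algebra_adjoin_le_adjoin K' _ h1⟩
  map_one' := Subtype.ext (by simp)
  map_mul' _ _ := Subtype.ext (by simp)
  map_zero' := Subtype.ext (by simp)
  map_add' _ _ := Subtype.ext (by simp)

@[simp] theorem toAdjoin_coe (y : ι → L) (p : MvPolynomial ι K') :
    ((toAdjoin y p : ↥(IntermediateField.adjoin K' (Set.range y))) : L)
      = MvPolynomial.aeval y p := rfl

theorem frac_of_algIndep {y : ι → L} (hy : AlgebraicIndependent K' y)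
    (m : ↥(IntermediateField.adjoin K' (Set.range y))) :
    ∃ a b : MvPolynomial ι K', toAdjoin y b ≠ 0 ∧ m = toAdjoin y a / toAdjoin y b := by
  obtain ⟨a, b, hbmem, h⟩ := IsFractionRing.div_surjective
    (A := MvPolynomial ι K') (hy.aevalEquivField.symm m)
  have hb0 : b ≠ 0 := nonZeroDivisors.ne_zero hbmem
  have hbne : toAdjoin y b ≠ 0 := by
    intro h0
    apply hb0
    have hz : MvPolynomial.aeval y b = 0 := by
      rw [← toAdjoin_coe y b, h0]
      simp
    exact hy (show _ from by rw [map_zero]; exact hz)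
  refine ⟨a, b, hbne, ?_⟩
  have hm : m = hy.aevalEquivField
      (algebraMap (MvPolynomial ι K') (FractionRing (MvPolynomial ι K')) a /
       algebraMap (MvPolynomial ι K') (FractionRing (MvPolynomial ι K')) b) := by
    rw [h, AlgEquiv.apply_symm_apply]
  rw [map_div₀] at hm
  have h1 : hy.aevalEquivField (algebraMap _ _ a) = toAdjoin y a :=
    Subtype.ext (by rw [hy.aevalEquivField_algebraMap_apply_coe]; rfl)
  have h2 : hy.aevalEquivField (algebraMap _ _ b) = toAdjoin y b :=
    Subtype.ext (by rw [hy.aevalEquivField_algebraMap_apply_coe]; rfl)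
  rw [hm, h1, h2]

end Frac

section AIO

variable {K' L : Type*} [Field K'] [Field L] [Algebra K' L] {ι κ : Type*}

/-- If the combined family is algebraically independent over `K'`, then the second part is
algebraically independent over the intermediate field generated by the first part. -/
theorem algIndep_over_adjoin {x : ι ⊕ κ → L} (hx : AlgebraicIndependent K' x) :
    AlgebraicIndependent (↥(IntermediateField.adjoin K' (Set.range (x ∘ Sum.inl))))
      (x ∘ Sum.inr) := by
  set M := IntermediateField.adjoin K' (Set.range (x ∘ Sum.inl)) with hM
  have hx1 : AlgebraicIndependent K' (x ∘ Sum.inl) := hx.comp Sum.inl Sum.inl_injective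
  rw [algebraicIndependent_iff_injective_aeval]
  have hcoe : ⇑(MvPolynomial.aeval (R := ↥M) (x ∘ Sum.inr) : MvPolynomial κ ↥M →ₐ[↥M] L)
      = ⇑(MvPolynomial.eval₂Hom (algebraMap ↥M L) (x ∘ Sum.inr)) := rfl
  rw [hcoe]
  apply clr (θ := toAdjoin (x ∘ Sum.inl)) (η := algebraMap ↥M L)
  · intro m
    obtain ⟨a, b, hbne, habm⟩ := frac_of_algIndep hx1 m
    exact ⟨a, b, hbne, habm⟩
  · have hcomp : (algebraMap ↥M L).comp (toAdjoin (x ∘ Sum.inl))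
        = ((MvPolynomial.aeval (x ∘ Sum.inl) : MvPolynomial ι K' →ₐ[K'] L) :
            MvPolynomial ι K' →+* L) := RingHom.ext fun p => rfl
    rw [hcomp]
    apply curry_inj
    have hequiv : Sum.elim (x ∘ Sum.inr) (x ∘ Sum.inl) = x ∘ ⇑(Equiv.sumComm κ ι) := by
      funext s; cases s <;> rfl
    have : AlgebraicIndependent K' (Sum.elim (x ∘ Sum.inr) (x ∘ Sum.inl)) := by
      rw [hequiv]
      exact hx.comp _ (Equiv.sumComm κ ι).injective
    exact algebraicIndependent_iff_injective_aeval.1 this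

end AIO

end BEI2

namespace BEI3
open BEI BEI2

section Exchange

variable {M L : Type*} [Field M] [Field L] [Algebra M L]

theorem exchange {t b : L}
    (h1 : IsAlgebraic (↥(IntermediateField.adjoin M ({b} : Set L))) t)
    (h2 : ¬ IsAlgebraic M t) :
    IsAlgebraic (↥(IntermediateField.adjoin M ({t} : Set L))) b := by
  by_contra hb
  have hxt : AlgebraicIndependent M (fun _ : Unit => t) := by
    rw [algebraicIndependent_unique_type_iff]
    exact h2
  have htrans : Transcendental (Algebra.adjoin M (Set.range (fun _ : Unit => t))) b := by
    intro halg
    apply hb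
    refine isAlgebraic_of_subalgebra (P := Algebra.adjoin M (Set.range (fun _ : Unit => t)))
      (Q := IntermediateField.adjoin M ({t} : Set L)) ?_ halg
    intro x hx
    have hrange : Set.range (fun _ : Unit => t) = ({t} : Set L) := Set.range_const
    rw [hrange] at hx
    exact IntermediateField.algebra_adjoin_le_adjoin M _ hx
  have hpair : AlgebraicIndependent M (fun o : Option Unit => o.elim b (fun _ : Unit => t)) :=
    (hxt.option_iff_transcendental b).2 htrans
  set f : Unit ⊕ Unit → Option Unit := Sum.elim (fun _ => Option.none) (fun _ => Option.some ())
    with hf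
  have hfinj : Function.Injective f := by
    rintro (u | u) (v | v) huv
    · rfl
    · simp [hf] at huv
    · simp [hf] at huv
    · rfl
  have hsum : AlgebraicIndependent M
      ((fun o : Option Unit => o.elim b (fun _ : Unit => t)) ∘ f) := hpair.comp f hfinj
  have haio := algIndep_over_adjoin (K' := M) hsum
  have hr : Set.range (((fun o : Option Unit => o.elim b (fun _ : Unit => t)) ∘ f) ∘ Sum.inl)
      = ({b} : Set L) := by
    ext z
    simp [hf, eq_comm]
  rw [hr] at haio
  exact haio.transcendental () h1

end Exchange

section EXB

universe u

theorem exb {L : Type u} [Field L] : ∀ (m : ℕ) (K' : Type u) [Field K'] [Algebra K' L]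
    (B : Finset L) (T : Set L), B.card ≤ m →
    AlgebraicIndependent K' ((↑) : T → L) →
    (∀ x ∈ T, IsAlgebraic (↥(IntermediateField.adjoin K' (↑B : Set L))) x) →
    Cardinal.mk T ≤ m := by
  intro m
  induction m with
  | zero =>
    intro K' _ _ B T hB hT halg
    have hTempty : T = ∅ := by
      ext x
      simp only [Set.mem_empty_iff_false, iff_false]
      intro hx
      apply hT.transcendental (⟨x, hx⟩ : T)
      have hBempty : B = ∅ := Finset.card_eq_zero.1 (Nat.le_zero.1 hB)
      have h2 : IsAlgebraic (↥(IntermediateField.adjoin K' (∅ : Set L))) x := by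
        have := halg x hx
        rwa [hBempty, Finset.coe_empty] at this
      rw [IntermediateField.adjoin_empty] at h2
      exact isAlgebraic_bot_down h2
    rw [hTempty]
    simp
  | succ m ih =>
    intro K' _ _ B T hB hT halg
    classical
    rcases Set.eq_empty_or_nonempty T with rfl | ⟨t, ht⟩
    · simp
    have htrans : ¬ IsAlgebraic K' t := hT.transcendental (⟨t, ht⟩ : T)
    set 𝒮 : Set (Finset L) :=
      {B' | B' ⊆ B ∧ IsAlgebraic (↥(IntermediateField.adjoin K' (↑B' : Set L))) t} with h𝒮
    have hSB : B ∈ 𝒮 := ⟨Finset.Subset.refl B, halg t ht⟩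
    have hex : ∃ n : ℕ, ∃ B' ∈ 𝒮, B'.card = n := ⟨B.card, B, hSB, rfl⟩
    obtain ⟨B', hB'mem, hcard⟩ := Nat.find_spec hex
    have hminimal : ∀ B'' ∈ 𝒮, ¬ B''.card < B'.card := by
      intro B'' hB'' hlt
      rw [hcard] at hlt
      exact Nat.find_min hex hlt ⟨B'', hB'', rfl⟩
    have hB'ne : B'.Nonempty := by
      rcases Finset.eq_empty_or_nonempty B' with rfl | h
      · exfalso
        apply htrans
        have h2 := hB'mem.2
        rw [Finset.coe_empty, IntermediateField.adjoin_empty] at h2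
        exact isAlgebraic_bot_down h2
      · exact h
    obtain ⟨b, hbB'⟩ := hB'ne
    have hbB : b ∈ B := hB'mem.1 hbB'
    set B'' := B'.erase b with hB''def
    set M := IntermediateField.adjoin K' ((↑B'' : Set L)) with hMdef
    have hnotalg : ¬ IsAlgebraic (↥M) t := by
      intro halg'
      exact hminimal B'' ⟨(Finset.erase_subset _ _).trans hB'mem.1, halg'⟩
        (Finset.card_erase_lt_of_mem hbB')
    -- transfer h1: t algebraic over adjoin M {b}
    have hsub1 : ∀ z ∈ IntermediateField.adjoin K' (↑B' : Set L),
        z ∈ IntermediateField.adjoin (↥M) ({b} : Set L) := by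
      have := (IntermediateField.adjoin_subset_adjoin_iff (F := K') (F' := ↥M)
        (S := (↑B' : Set L)) (S' := ({b} : Set L))).2 ?_
      · exact fun z hz => this hz
      constructor
      · rintro _ ⟨k, rfl⟩
        have hk : algebraMap K' L k ∈ M := IntermediateField.algebraMap_mem M k
        exact IntermediateField.algebraMap_mem _ (⟨algebraMap K' L k, hk⟩ : ↥M)
      · intro x hx
        rcases Finset.mem_coe.1 hx with hx'
        by_cases hxb : x = b
        · subst hxb
          exact IntermediateField.subset_adjoin _ _ rfl
        · have : x ∈ M := IntermediateField.subset_adjoin _ _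
            (by exact Finset.mem_coe.2 (Finset.mem_erase.2 ⟨hxb, hx'⟩))
          exact IntermediateField.algebraMap_mem _ (⟨x, this⟩ : ↥M)
    have h1 : IsAlgebraic (↥(IntermediateField.adjoin (↥M) ({b} : Set L))) t :=
      isAlgebraic_mono hsub1 hB'mem.2
    have h3 : IsAlgebraic (↥(IntermediateField.adjoin (↥M) ({t} : Set L))) b :=
      exchange h1 hnotalg
    -- new base field
    set K'' := IntermediateField.adjoin K' ({t} : Set L) with hK''def
    set T' : Set L := T \ {t} with hT'def
    set B₂ := B.erase b with hB₂def
    -- (i) T' is algebraically independent over K''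
    set x : Unit ⊕ ↥T' → L := Sum.elim (fun _ => t) (fun z => (z : L)) with hx
    have hxai : AlgebraicIndependent K' x := by
      set g : Unit ⊕ ↥T' → ↥T := Sum.elim (fun _ => ⟨t, ht⟩) (fun z => ⟨z.1, z.2.1⟩) with hg
      have hginj : Function.Injective g := by
        rintro (u | u) (v | v) huv
        · rfl
        · exfalso
          have := congrArg Subtype.val huv
          simp [hg] at this
          exact v.2.2 this.symm
        · exfalso
          have := congrArg Subtype.val huv
          simp [hg] at this
          exact u.2.2 this
        · have := congrArg Subtype.val huv
          simp [hg] at this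
          exact congrArg Sum.inr (Subtype.ext this)
      have := hT.comp g hginj
      have heq : ((↑) : T → L) ∘ g = x := by
        funext s
        rcases s with s | s <;> rfl
      rwa [heq] at this
    have haio := algIndep_over_adjoin (K' := K') hxai
    have hr : Set.range (x ∘ Sum.inl) = ({t} : Set L) := by
      ext z
      constructor
      · rintro ⟨u, rfl⟩
        rfl
      · rintro rfl
        exact ⟨(), rfl⟩
    rw [hr] at haio
    have hT'ai : AlgebraicIndependent (↥K'') ((↑) : T' → L) := haio
    -- (ii) every element of T' is algebraic over adjoin K'' B₂
    set N := IntermediateField.adjoin (↥K'') ((↑B₂ : Set L)) with hNdef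
    have hK'inN : ∀ k : K', algebraMap K' L k ∈ N := by
      intro k
      have hk : algebraMap K' L k ∈ K'' := IntermediateField.algebraMap_mem K'' k
      exact IntermediateField.algebraMap_mem _ (⟨algebraMap K' L k, hk⟩ : ↥K'')
    have htinN : t ∈ N := by
      have htK'' : t ∈ K'' := IntermediateField.subset_adjoin _ _ rfl
      exact IntermediateField.algebraMap_mem _ (⟨t, htK''⟩ : ↥K'')
    have hMinN : ∀ z ∈ M, z ∈ N := by
      have := (IntermediateField.adjoin_subset_adjoin_iff (F := K') (F' := ↥K'')
        (S := (↑B'' : Set L)) (S' := (↑B₂ : Set L))).2 ?_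
      · exact fun z hz => this hz
      constructor
      · rintro _ ⟨k, rfl⟩
        exact hK'inN k
      · intro z hz
        have hz' : z ∈ B'' := Finset.mem_coe.1 hz
        have : z ∈ B₂ := Finset.mem_erase.2
          ⟨(Finset.mem_erase.1 hz').1, hB'mem.1 (Finset.mem_erase.1 hz').2⟩
        exact IntermediateField.subset_adjoin _ _ (Finset.mem_coe.2 this)
    have hbN : IsAlgebraic (↥N) b := by
      refine isAlgebraic_mono ?_ h3
      have := (IntermediateField.adjoin_subset_adjoin_iff (F := ↥M) (F' := ↥K'')
        (S := ({t} : Set L)) (S' := (↑B₂ : Set L))).2 ?_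
      · exact fun z hz => this hz
      constructor
      · rintro _ ⟨⟨z, hzM⟩, rfl⟩
        exact hMinN z hzM
      · intro z hz
        rcases hz with rfl
        exact htinN
    have halg' : ∀ z ∈ T', IsAlgebraic (↥N) z := by
      intro z hz
      set P := IntermediateField.adjoin (↥N) ({b} : Set L) with hPdef
      have hsubP : ∀ w ∈ IntermediateField.adjoin K' (↑B : Set L), w ∈ P := by
        have := (IntermediateField.adjoin_subset_adjoin_iff (F := K') (F' := ↥N)
          (S := (↑B : Set L)) (S' := ({b} : Set L))).2 ?_
        · exact fun w hw => this hw
        constructor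
        · rintro _ ⟨k, rfl⟩
          exact IntermediateField.algebraMap_mem _ (⟨algebraMap K' L k, hK'inN k⟩ : ↥N)
        · intro w hw
          by_cases hwb : w = b
          · subst hwb
            exact IntermediateField.subset_adjoin _ _ rfl
          · have hwB₂ : w ∈ B₂ := Finset.mem_erase.2 ⟨hwb, Finset.mem_coe.1 hw⟩
            have hwN : w ∈ N := IntermediateField.subset_adjoin _ _ (Finset.mem_coe.2 hwB₂)
            exact IntermediateField.algebraMap_mem _ (⟨w, hwN⟩ : ↥N)
      have hzP : IsAlgebraic (↥P) z := isAlgebraic_mono hsubP (halg z hz.1)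
      have hbi : IsIntegral (↥N) b := isAlgebraic_iff_isIntegral.1 hbN
      haveI : FiniteDimensional (↥N) (↥P) := IntermediateField.adjoin.finiteDimensional hbi
      haveI : Algebra.IsIntegral (↥N) (↥P) := Algebra.IsIntegral.of_finite _ _
      have hint : IsIntegral (↥P) z := isAlgebraic_iff_isIntegral.1 hzP
      exact (isIntegral_trans (R := ↥N) z hint).isAlgebraic
    -- apply induction hypothesis
    have hB₂card : B₂.card ≤ m := by
      rw [hB₂def, Finset.card_erase_of_mem hbB]
      omega
    have hmk : Cardinal.mk T' ≤ m := ih (↥K'') B₂ T' hB₂card hT'ai halg'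
    have hTile : Cardinal.mk T ≤ Cardinal.mk T' + 1 := by
      have hTeq : T = insert t T' := by
        rw [hT'def, Set.insert_diff_singleton, Set.insert_eq_of_mem ht]
      rw [hTeq]
      exact Cardinal.mk_insert_le
    calc Cardinal.mk T ≤ Cardinal.mk T' + 1 := hTile
      _ ≤ (m : Cardinal) + 1 := add_le_add_left hmk 1
      _ = ((m + 1 : ℕ) : Cardinal) := by push_cast; ring

end EXB

end BEI3

namespace BEI4
open BEI BEI2 Function

section Comb

variable {K F : Type*} [Field K] [Field F] [Algebra K F]

/-- Ring hom from polynomials into an intermediate field containing the values. -/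
noncomputable def resHomIF {ι : Type*} (y : ι → F) (P : IntermediateField K F)
    (h : ∀ i, y i ∈ P) : MvPolynomial ι K →+* ↥P where
  toFun p := ⟨MvPolynomial.aeval y p, by
    have h1 : MvPolynomial.aeval y p ∈ Algebra.adjoin K (Set.range y) := by
      rw [Algebra.adjoin_range_eq_range_aeval]
      exact ⟨p, rfl⟩
    have h2 : Algebra.adjoin K (Set.range y) ≤ P.toSubalgebra := by
      rw [Algebra.adjoin_le_iff]
      rintro _ ⟨i, rfl⟩
      exact h i
    exact h2 h1⟩
  map_one' := Subtype.ext (by simp)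
  map_mul' _ _ := Subtype.ext (by simp)
  map_zero' := Subtype.ext (by simp)
  map_add' _ _ := Subtype.ext (by simp)

@[simp] theorem resHomIF_coe {ι : Type*} (y : ι → F) (P : IntermediateField K F)
    (h : ∀ i, y i ∈ P) (p : MvPolynomial ι K) :
    ((resHomIF y P h p : ↥P) : F) = MvPolynomial.aeval y p := rfl

theorem flip_sum {ι₁ ι₂ : Type*} {t₁ : ι₁ → F} {t₂ : ι₂ → F}
    (h : AlgebraicIndependent K (Sum.elim t₁ t₂)) :
    AlgebraicIndependent K (Sum.elim t₂ t₁) := by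
  have h2 := h.comp (Equiv.sumComm ι₂ ι₁) (Equiv.injective _)
  have he : (Sum.elim t₁ t₂) ∘ (Equiv.sumComm ι₂ ι₁) = Sum.elim t₂ t₁ := by
    funext s; cases s <;> rfl
  rwa [he] at h2

/-- If `t₁` is algebraically independent over `K` with values in `P`, and `t₂` is
algebraically independent over `P`, then the combined family is algebraically
independent over `K`. -/
theorem comb {ι₁ ι₂ : Type*} {t₁ : ι₁ → F} {t₂ : ι₂ → F} {P : IntermediateField K F}
    (hmem : ∀ i, t₁ i ∈ P) (ht₁ : AlgebraicIndependent K t₁)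
    (ht₂P : AlgebraicIndependent (↥P) t₂) :
    AlgebraicIndependent K (Sum.elim t₁ t₂) := by
  have hP2 : Injective ⇑(MvPolynomial.eval₂Hom (algebraMap (↥P) F) t₂) := by
    have hcoe : ⇑(MvPolynomial.aeval (R := ↥P) t₂ : MvPolynomial ι₂ ↥P →ₐ[↥P] F)
        = ⇑(MvPolynomial.eval₂Hom (algebraMap (↥P) F) t₂) := rfl
    have := algebraicIndependent_iff_injective_aeval.1 ht₂P
    rwa [hcoe] at this
  set θ : MvPolynomial ι₁ K →+* ↥P := resHomIF t₁ P hmem with hθ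
  have hθinj : Injective θ := by
    intro p q hpq
    have h2 := congrArg Subtype.val hpq
    exact ht₁ h2
  have hfact : (MvPolynomial.eval₂Hom (algebraMap (↥P) F) t₂).comp (MvPolynomial.map θ)
      = MvPolynomial.eval₂Hom
          ((MvPolynomial.aeval t₁ : MvPolynomial ι₁ K →ₐ[K] F) : MvPolynomial ι₁ K →+* F) t₂ := by
    apply RingHom.ext
    intro p
    show MvPolynomial.eval₂ (algebraMap (↥P) F) t₂ (MvPolynomial.map θ p) = _
    rw [MvPolynomial.eval₂_map]
    rfl
  have hinj2 : Injective ⇑(MvPolynomial.eval₂Hom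
      ((MvPolynomial.aeval t₁ : MvPolynomial ι₁ K →ₐ[K] F) : MvPolynomial ι₁ K →+* F) t₂) := by
    rw [← hfact]
    exact hP2.comp (MvPolynomial.map_injective θ hθinj)
  rw [BEI.curry_eq] at hinj2
  have hleft : ∀ p : MvPolynomial (ι₂ ⊕ ι₁) K,
      MvPolynomial.iterToSum K ι₂ ι₁ (MvPolynomial.sumToIter K ι₂ ι₁ p) = p := fun p =>
    RingHom.congr_fun (show (MvPolynomial.iterToSum K ι₂ ι₁).comp (MvPolynomial.sumToIter K ι₂ ι₁)
      = RingHom.id _ from MvPolynomial.ringHom_ext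
        (fun a => by simp [MvPolynomial.sumToIter_C, MvPolynomial.iterToSum_C_C])
        (fun s => by
          cases s <;> simp [MvPolynomial.sumToIter_Xl, MvPolynomial.sumToIter_Xr,
            MvPolynomial.iterToSum_X, MvPolynomial.iterToSum_C_X])) p
  have hsurj : Surjective ⇑(MvPolynomial.iterToSum K ι₂ ι₁) := fun p =>
    ⟨MvPolynomial.sumToIter K ι₂ ι₁ p, hleft p⟩
  have hinj3 : Injective ⇑(MvPolynomial.aeval (R := K) (Sum.elim t₂ t₁)) := by
    intro p q hpq
    obtain ⟨p', rfl⟩ := hsurj p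
    obtain ⟨q', rfl⟩ := hsurj q
    exact congrArg _ (hinj2 hpq)
  exact flip_sum (algebraicIndependent_iff_injective_aeval.2 hinj3)

end Comb

section Blocks

variable {K F σ : Type*} [Field K] [Field F] [Algebra K F]

/-- The subfamily of an algebraically independent family indexed by `W₁` remains
algebraically independent over the intermediate field generated by a disjoint subfamily. -/
theorem vars_indep_over_block {v : σ → F} (hv : AlgebraicIndependent K v) (W₁ W₂ : Set σ)
    (hdisj : ∀ s, s ∈ W₁ → s ∈ W₂ → False) :
    AlgebraicIndependent (↥(IntermediateField.adjoin K (Set.range (fun w : W₂ => v w))))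
      (fun w : W₁ => v w) := by
  set y₁ : W₁ → F := fun w => v w with hy₁
  set y₂ : W₂ → F := fun w => v w with hy₂
  have hy₂ai : AlgebraicIndependent K y₂ := hv.comp Subtype.val Subtype.val_injective
  rw [algebraicIndependent_iff_injective_aeval]
  have hcoe : ⇑(MvPolynomial.aeval y₁ :
        MvPolynomial W₁ ↥(IntermediateField.adjoin K (Set.range y₂))
          →ₐ[↥(IntermediateField.adjoin K (Set.range y₂))] F)
      = ⇑(MvPolynomial.eval₂Hom
          (algebraMap (↥(IntermediateField.adjoin K (Set.range y₂))) F) y₁) := rfl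
  rw [hcoe]
  apply BEI.clr (θ := toAdjoin y₂)
  · intro m
    obtain ⟨a, b, hbne, habm⟩ := frac_of_algIndep hy₂ai m
    exact ⟨a, b, hbne, habm⟩
  · have hcomp : (algebraMap (↥(IntermediateField.adjoin K (Set.range y₂))) F).comp
        (toAdjoin y₂)
        = ((MvPolynomial.aeval y₂ : MvPolynomial W₂ K →ₐ[K] F) :
            MvPolynomial W₂ K →+* F) := RingHom.ext fun p => rfl
    rw [hcomp]
    apply BEI.curry_inj
    set e : W₁ ⊕ W₂ → σ := Sum.elim Subtype.val Subtype.val with he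
    have heinj : Injective e := by
      rintro (u | u) (v' | v') huv
      · exact congrArg Sum.inl (Subtype.ext huv)
      · exfalso
        have hval : (u : σ) = (v' : σ) := huv
        exact hdisj _ u.2 (hval ▸ v'.2)
      · exfalso
        have hval : (v' : σ) = (u : σ) := huv.symm
        exact hdisj _ v'.2 (hval ▸ u.2)
      · exact congrArg Sum.inr (Subtype.ext huv)
    have hcompfam : Sum.elim y₁ y₂ = v ∘ e := by
      funext s; cases s <;> rfl
    have : AlgebraicIndependent K (Sum.elim y₁ y₂) := by
      rw [hcompfam]
      exact hv.comp e heinj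
    exact algebraicIndependent_iff_injective_aeval.1 this

/-- Two algebraically independent families supported on disjoint blocks of variables
combine to an algebraically independent family. -/
theorem fb2 {v : σ → F} (hv : AlgebraicIndependent K v) (W₁ W₂ : Set σ)
    (hdisj : ∀ s, s ∈ W₁ → s ∈ W₂ → False) {ι₁ ι₂ : Type*} {t₁ : ι₁ → F} {t₂ : ι₂ → F}
    (ht₁ : AlgebraicIndependent K t₁) (ht₂ : AlgebraicIndependent K t₂)
    (ht₁P : ∀ i, t₁ i ∈ IntermediateField.adjoin K (Set.range (fun w : W₁ => v w)))
    (ht₂P : ∀ i, t₂ i ∈ IntermediateField.adjoin K (Set.range (fun w : W₂ => v w))) :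
    AlgebraicIndependent K (Sum.elim t₁ t₂) := by
  set y₁ : W₁ → F := fun w => v w with hy₁
  have hβ4 := vars_indep_over_block hv W₁ W₂ hdisj
  have hβ3 : AlgebraicIndependent K (Sum.elim t₂ y₁) := comb ht₂P ht₂ hβ4
  have hflip : AlgebraicIndependent K (Sum.elim y₁ t₂) := flip_sum hβ3
  have hstep1 : AlgebraicIndependent (↥(IntermediateField.adjoin K (Set.range y₁))) t₂ := by
    have h := algIndep_over_adjoin (K' := K) hflip
    have h1 : (Sum.elim y₁ t₂) ∘ Sum.inl = y₁ := rfl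
    have h2 : (Sum.elim y₁ t₂) ∘ Sum.inr = t₂ := rfl
    rw [h1, h2] at h
    exact h
  exact comb ht₁P ht₁ hstep1

end Blocks

end BEI4

namespace BEI5
open BEI BEI2 BEI3 BEI4 Function

theorem trdeg_adjoin_eq {K F : Type} [Field K] [Field F] [Algebra K F]
    (S T₀ : Set F) (hT₀fin : T₀.Finite) (hT₀S : T₀ ⊆ S)
    (hT₀ : AlgebraicIndependent K ((↑) : T₀ → F))
    (halg : ∀ x ∈ S, IsAlgebraic (↥(IntermediateField.adjoin K T₀)) x) :
    trdeg K (↥(IntermediateField.adjoin K S)) = Cardinal.mk T₀ := by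
  classical
  have hSsub : T₀ ⊆ (IntermediateField.adjoin K S : Set F) :=
    fun x hx => IntermediateField.subset_adjoin K S (hT₀S hx)
  set T₀' : Set (↥(IntermediateField.adjoin K S)) := {y | (y : F) ∈ T₀} with hT₀'def
  set e : ↥T₀' ≃ ↥T₀ :=
    { toFun := fun y => ⟨(y.1 : F), y.2⟩
      invFun := fun x => ⟨⟨x.1, hSsub x.2⟩, x.2⟩
      left_inv := fun y => Subtype.ext (Subtype.ext rfl)
      right_inv := fun x => Subtype.ext rfl } with he
  have hT₀'ai : AlgebraicIndependent K ((↑) : T₀' → ↥(IntermediateField.adjoin K S)) := by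
    apply AlgebraicIndependent.of_comp (IntermediateField.adjoin K S).val
    exact hT₀.comp e e.injective
  have hmkeq : Cardinal.mk T₀' = Cardinal.mk T₀ := Cardinal.mk_congr e
  apply le_antisymm
  · -- trdeg ≤ #T₀
    haveI : Nonempty {s : Set (↥(IntermediateField.adjoin K S)) //
        AlgebraicIndependent K ((↑) : s → ↥(IntermediateField.adjoin K S))} :=
      ⟨⟨∅, algebraicIndependent_empty⟩⟩
    apply ciSup_le'
    rintro ⟨s, hs⟩
    have hval : AlgebraicIndependent K
        (fun x : (Subtype.val '' s : Set F) => (x : F)) := by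
      have h1 : AlgebraicIndependent K
          (fun x : s => ((x : ↥(IntermediateField.adjoin K S)) : F)) :=
        hs.map' (f := (IntermediateField.adjoin K S).val) Subtype.val_injective
      exact h1.image
    -- every element of the image is algebraic over adjoin K T₀
    have halg' : ∀ z ∈ (Subtype.val '' s : Set F),
        IsAlgebraic (↥(IntermediateField.adjoin K T₀)) z := by
      rintro z ⟨y, _, rfl⟩
      set M₀ := IntermediateField.adjoin K T₀ with hM₀
      set E := IntermediateField.adjoin (↥M₀) S with hE
      haveI : Algebra.IsAlgebraic (↥M₀) (↥E) :=
        IntermediateField.isAlgebraic_adjoin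
          (fun x hx => isAlgebraic_iff_isIntegral.1 (halg x hx))
      have hzE : (y : F) ∈ E := by
        have hsub : ∀ w ∈ IntermediateField.adjoin K S, w ∈ E := by
          have := (IntermediateField.adjoin_subset_adjoin_iff (F := K) (F' := ↥M₀)
            (S := S) (S' := S)).2 ?_
          · exact fun w hw => this hw
          constructor
          · rintro _ ⟨k, rfl⟩
            exact IntermediateField.algebraMap_mem _
              (⟨algebraMap K F k, IntermediateField.algebraMap_mem M₀ k⟩ : ↥M₀)
          · exact fun w hw => IntermediateField.subset_adjoin _ _ hw
        exact hsub _ y.2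
      have := Algebra.IsAlgebraic.isAlgebraic (R := ↥M₀) (⟨(y : F), hzE⟩ : ↥E)
      exact (IntermediateField.isAlgebraic_iff).1 this
    have hcard : Cardinal.mk (Subtype.val '' s : Set F) ≤ (hT₀fin.toFinset.card : Cardinal) := by
      apply exb hT₀fin.toFinset.card K hT₀fin.toFinset (Subtype.val '' s) le_rfl hval
      intro x hx
      have hcoe : (↑hT₀fin.toFinset : Set F) = T₀ := hT₀fin.coe_toFinset
      rw [hcoe]
      exact halg' x hx
    have hmkT₀ : Cardinal.mk T₀ = (hT₀fin.toFinset.card : Cardinal) := by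
      conv_lhs => rw [← hT₀fin.coe_toFinset]
      exact Cardinal.mk_coe_finset
    have himg : Cardinal.mk s = Cardinal.mk (Subtype.val '' s : Set F) :=
      (Cardinal.mk_image_eq Subtype.val_injective).symm
    rw [himg, hmkT₀]
    exact hcard
  · -- #T₀ ≤ trdeg
    have := le_ciSup (f := fun s : {s : Set (↥(IntermediateField.adjoin K S)) //
        AlgebraicIndependent K ((↑) : s → ↥(IntermediateField.adjoin K S))} => Cardinal.mk s.1)
      (Cardinal.bddAbove_range _) ⟨T₀', hT₀'ai⟩
    rw [hmkeq] at this
    exact this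

end BEI5

namespace BEI6
open BEI BEI2 BEI3 BEI4 BEI5 Function MvPolynomial

variable {K : Type} [Field K] {n : ℕ}

/-- Distinguishing edge binomials via evaluation. -/
theorem binom_cases {i j i' j' : Fin n} (hij : i ≠ j)
    (h : (X (Sum.inl i) * X (Sum.inr j) - X (Sum.inl j) * X (Sum.inr i) :
        MvPolynomial (Fin n ⊕ Fin n) K)
      = X (Sum.inl i') * X (Sum.inr j') - X (Sum.inl j') * X (Sum.inr i')) :
    (i' = i ∧ j' = j) ∨ (i' = j ∧ j' = i) := by
  classical
  by_cases h1 : i' = i ∧ j' = j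
  · exact Or.inl h1
  by_cases h2 : i' = j ∧ j' = i
  · exact Or.inr h2
  exfalso
  set pt : (Fin n ⊕ Fin n) → K :=
    Sum.elim (fun a => if a = i then 1 else 0) (fun b => if b = j then 1 else 0) with hpt
  have hev := congrArg (MvPolynomial.eval pt) h
  simp only [map_sub, map_mul, MvPolynomial.eval_X, hpt, Sum.elim_inl, Sum.elim_inr] at hev
  rw [if_neg (Ne.symm hij), if_neg hij] at hev
  rcases not_and_or.1 h1 with hA | hA <;> rcases not_and_or.1 h2 with hB | hB <;>
    simp [hA, hB] at hev

section Main

variable (K n)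

/-- The variables, inside the fraction field. -/
noncomputable def vv : (Fin n ⊕ Fin n) → FractionRing (MvPolynomial (Fin n ⊕ Fin n) K) :=
  fun s => algebraMap (MvPolynomial (Fin n ⊕ Fin n) K) _ (X s)

theorem vv_ai : AlgebraicIndependent K (vv K n) := by
  have h1 : AlgebraicIndependent K (X : (Fin n ⊕ Fin n) → MvPolynomial (Fin n ⊕ Fin n) K) :=
    MvPolynomial.algebraicIndependent_X _ K
  have h2 := h1.map'
    (f := IsScalarTower.toAlgHom K (MvPolynomial (Fin n ⊕ Fin n) K)
      (FractionRing (MvPolynomial (Fin n ⊕ Fin n) K)))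
    (IsFractionRing.injective _ _)
  exact h2

/-- Every element of the fraction field lies in the field generated by the variables. -/
theorem mem_adjoin_vv (x : FractionRing (MvPolynomial (Fin n ⊕ Fin n) K)) :
    x ∈ IntermediateField.adjoin K (Set.range (vv K n)) := by
  obtain ⟨p, q, hq, rfl⟩ := IsFractionRing.div_surjective (A := MvPolynomial (Fin n ⊕ Fin n) K) x
  have hmem : ∀ r : MvPolynomial (Fin n ⊕ Fin n) K,
      algebraMap (MvPolynomial (Fin n ⊕ Fin n) K) (FractionRing (MvPolynomial (Fin n ⊕ Fin n) K)) r
        ∈ IntermediateField.adjoin K (Set.range (vv K n)) := by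
    intro r
    set φ := IsScalarTower.toAlgHom K (MvPolynomial (Fin n ⊕ Fin n) K)
      (FractionRing (MvPolynomial (Fin n ⊕ Fin n) K)) with hφ
    have h2 : r ∈ Algebra.adjoin K (Set.range (X : (Fin n ⊕ Fin n) → _)) := by
      rw [MvPolynomial.adjoin_range_X]
      trivial
    have h3 : φ r ∈ (Algebra.adjoin K (Set.range (X : (Fin n ⊕ Fin n) → _))).map φ :=
      Subalgebra.mem_map.2 ⟨r, h2, rfl⟩
    rw [AlgHom.map_adjoin] at h3
    have h4 : ⇑φ '' Set.range (X : (Fin n ⊕ Fin n) → _) = Set.range (vv K n) := by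
      rw [← Set.range_comp]
      rfl
    rw [h4] at h3
    exact IntermediateField.algebra_adjoin_le_adjoin K _ h3
  exact div_mem (hmem p) (hmem q)

variable {n} (G : SimpleGraph (Fin n))

/-- The variable block of a connected component. -/
def Wc (c : G.ConnectedComponent) : Set (Fin n ⊕ Fin n) :=
  {s | G.connectedComponentMk (Sum.elim id id s) = c}

theorem Wc_disj {c c' : G.ConnectedComponent} (h : c ≠ c') :
    ∀ s, s ∈ Wc G c → s ∈ Wc G c' → False := by
  intro s h1 h2
  exact h (h1 ▸ h2 ▸ rfl)

theorem edgeBinoms_subset_adjoin (c : G.ConnectedComponent) :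
    ∀ z ∈ edgeBinoms K (compSubgraph G c),
      z ∈ IntermediateField.adjoin K (Set.range (fun w : Wc G c => vv K n w)) := by
  rintro z ⟨i, j, hadj, rfl⟩
  obtain ⟨hadj', hmk⟩ : G.Adj i j ∧ G.connectedComponentMk i = c := hadj
  have hmkj : G.connectedComponentMk j = c := by
    rw [← hmk]
    exact (SimpleGraph.ConnectedComponent.sound hadj'.reachable).symm
  have hmem : ∀ s : Fin n ⊕ Fin n, s ∈ Wc G c →
      vv K n s ∈ IntermediateField.adjoin K (Set.range (fun w : Wc G c => vv K n w)) :=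
    fun s hs => IntermediateField.subset_adjoin _ _ ⟨⟨s, hs⟩, rfl⟩
  have h1 : (Sum.inl i : Fin n ⊕ Fin n) ∈ Wc G c := hmk
  have h2 : (Sum.inl j : Fin n ⊕ Fin n) ∈ Wc G c := hmkj
  have h3 : (Sum.inr i : Fin n ⊕ Fin n) ∈ Wc G c := hmk
  have h4 : (Sum.inr j : Fin n ⊕ Fin n) ∈ Wc G c := hmkj
  have hrw : algebraMap (MvPolynomial (Fin n ⊕ Fin n) K)
        (FractionRing (MvPolynomial (Fin n ⊕ Fin n) K))
        (X (Sum.inl i) * X (Sum.inr j) - X (Sum.inl j) * X (Sum.inr i))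
      = vv K n (Sum.inl i) * vv K n (Sum.inr j) - vv K n (Sum.inl j) * vv K n (Sum.inr i) := by
    rw [map_sub, map_mul, map_mul]
    rfl
  rw [hrw]
  exact sub_mem (mul_mem (hmem _ h1) (hmem _ h4)) (mul_mem (hmem _ h2) (hmem _ h3))

theorem edgeBinoms_union :
    edgeBinoms K G = ⋃ c : G.ConnectedComponent, edgeBinoms K (compSubgraph G c) := by
  ext z
  constructor
  · rintro ⟨i, j, hadj, rfl⟩
    refine Set.mem_iUnion.2 ⟨G.connectedComponentMk i, ⟨i, j, ?_, rfl⟩⟩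
    exact ⟨hadj, rfl⟩
  · intro hz
    obtain ⟨c, hc⟩ := Set.mem_iUnion.1 hz
    obtain ⟨i, j, hadj, rfl⟩ := hc
    obtain ⟨hadj', -⟩ : G.Adj i j ∧ G.connectedComponentMk i = c := hadj
    exact ⟨i, j, hadj', rfl⟩

theorem edgeBinoms_disj {c c' : G.ConnectedComponent} (hcc' : c ≠ c') :
    ∀ z, z ∈ edgeBinoms K (compSubgraph G c) → z ∈ edgeBinoms K (compSubgraph G c') → False := by
  rintro z ⟨i, j, hadj, rfl⟩ ⟨i', j', hadj', heq⟩
  obtain ⟨hadj1, hmk⟩ : G.Adj i j ∧ G.connectedComponentMk i = c := hadj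
  obtain ⟨hadj1', hmk'⟩ : G.Adj i' j' ∧ G.connectedComponentMk i' = c' := hadj'
  have hpoly := IsFractionRing.injective (MvPolynomial (Fin n ⊕ Fin n) K)
    (FractionRing (MvPolynomial (Fin n ⊕ Fin n) K)) heq
  have hmkj : G.connectedComponentMk j = G.connectedComponentMk i :=
    (SimpleGraph.ConnectedComponent.sound hadj1.reachable).symm
  apply hcc'
  rcases binom_cases hadj1.ne hpoly with ⟨hii, -⟩ | ⟨hij', -⟩
  · rw [← hmk, ← hmk', hii]
  · rw [← hmk, ← hmk', hij', hmkj]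

/-- Existence of a maximal algebraically independent subset of a set, with the
maximality property recast as algebraicity. -/
theorem exists_good_subset (S : Set (FractionRing (MvPolynomial (Fin n ⊕ Fin n) K))) :
    ∃ T : Set (FractionRing (MvPolynomial (Fin n ⊕ Fin n) K)), T ⊆ S ∧
      AlgebraicIndependent K ((↑) : T → FractionRing (MvPolynomial (Fin n ⊕ Fin n) K)) ∧
      ∀ x ∈ S, IsAlgebraic (↥(IntermediateField.adjoin K T)) x := by
  classical
  obtain ⟨T, -, hmax⟩ := exists_maximal_algebraicIndependent (R := K) (∅ : Set _) S
    (Set.empty_subset _) algebraicIndependent_empty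
  refine ⟨T, hmax.1.2, hmax.1.1, ?_⟩
  intro x hx
  by_cases hxT : x ∈ T
  · exact isAlgebraic_algebraMap
      (⟨x, IntermediateField.subset_adjoin _ _ hxT⟩ : IntermediateField.adjoin K T)
  by_contra htr
  have htr' : Transcendental
      (Algebra.adjoin K (Set.range ((↑) : T → FractionRing (MvPolynomial (Fin n ⊕ Fin n) K)))) x := by
    intro halg'
    apply htr
    refine isAlgebraic_of_subalgebra (Q := IntermediateField.adjoin K T) ?_ halg'
    intro w hw
    rw [Subtype.range_coe] at hw
    exact IntermediateField.algebra_adjoin_le_adjoin K _ hw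
  have hopt : AlgebraicIndependent K (fun o : Option T => o.elim x ((↑) : T → _)) :=
    (hmax.1.1.option_iff_transcendental x).2 htr'
  have hrange : Set.range (fun o : Option T => o.elim x ((↑) : T → _)) = insert x T := by
    ext w
    constructor
    · rintro ⟨(_ | y), rfl⟩
      · exact Set.mem_insert _ _
      · exact Set.mem_insert_of_mem _ y.2
    · rintro (rfl | hw)
      · exact ⟨none, rfl⟩
      · exact ⟨some ⟨w, hw⟩, rfl⟩
  have hins := hopt.coe_range
  rw [hrange] at hins
  have hle := hmax.2 ⟨hins, Set.insert_subset hx hmax.1.2⟩ (Set.subset_insert x T)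
  exact hxT (hle (Set.mem_insert x T))

end Main

end BEI6

set_option maxHeartbeats 1000000 in
open BEI BEI2 BEI3 BEI4 BEI5 BEI6 in
/-- The analytic spread of `J_G` is the sum of the analytic spreads of the binomial edge
ideals of the connected components of `G`. -/
theorem spread_eq_sum_components
    (K : Type) [Field K] [Infinite K] (n : ℕ) (G : SimpleGraph (Fin n)) :
    spread K G = ∑ᶠ c : G.ConnectedComponent, spread K (compSubgraph G c) := by
  classical
  haveI : Fintype G.ConnectedComponent := Fintype.ofFinite _
  have hTex := fun c : G.ConnectedComponent =>
    exists_good_subset (K := K) (S := edgeBinoms K (compSubgraph G c))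
  choose T hTsub hTai hTalg using hTex
  have hTfin : ∀ c, (T c).Finite := by
    intro c
    have hB : Cardinal.mk (T c) ≤ ((Finset.univ.image (vv K n)).card : Cardinal) := by
      apply exb _ K (Finset.univ.image (vv K n)) (T c) le_rfl (hTai c)
      intro x _
      have hcoe : (↑(Finset.univ.image (vv K n)) :
          Set (FractionRing (MvPolynomial (Fin n ⊕ Fin n) K))) = Set.range (vv K n) := by
        rw [Finset.coe_image, Finset.coe_univ, Set.image_univ]
      rw [hcoe]
      exact isAlgebraic_algebraMap
        (⟨x, mem_adjoin_vv K n x⟩ : IntermediateField.adjoin K (Set.range (vv K n)))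
    exact Cardinal.lt_aleph0_iff_set_finite.1 (lt_of_le_of_lt hB (Cardinal.nat_lt_aleph0 _))
  have hspread : ∀ c, spread K (compSubgraph G c) = Cardinal.mk (T c) := by
    intro c
    show trdeg K (↥(IntermediateField.adjoin K (edgeBinoms K (compSubgraph G c)))) = _
    exact trdeg_adjoin_eq _ _ (hTfin c) (hTsub c) (hTai c) (hTalg c)
  have hWdisj : ∀ (c : G.ConnectedComponent) (s : Finset G.ConnectedComponent), c ∉ s →
      ∀ w, w ∈ Wc G c → w ∈ (⋃ c' ∈ s, Wc G c') → False := by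
    intro c s hcs w hw hw'
    rw [Set.mem_iUnion₂] at hw'
    obtain ⟨c', hc's, hwc'⟩ := hw'
    have hw1 : G.connectedComponentMk (Sum.elim id id w) = c := hw
    have hw2 : G.connectedComponentMk (Sum.elim id id w) = c' := hwc'
    have hcc : c = c' := by rw [← hw1, hw2]
    exact hcs (hcc ▸ hc's)
  have hUnion : ∀ s : Finset G.ConnectedComponent,
      AlgebraicIndependent K
        ((↑) : (⋃ c ∈ s, T c) → FractionRing (MvPolynomial (Fin n ⊕ Fin n) K)) ∧
      ∀ z ∈ (⋃ c ∈ s, T c),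
        z ∈ IntermediateField.adjoin K
          (Set.range (fun w : (⋃ c ∈ s, Wc G c) => vv K n w)) := by
    intro s
    induction s using Finset.induction_on with
    | empty =>
      constructor
      · have he : (⋃ c ∈ (∅ : Finset G.ConnectedComponent), T c) = (∅ : Set _) := by simp
        rw [he]
        exact algebraicIndependent_empty
      · intro z hz
        simp at hz
    | @insert c₀ s hc₀ ih =>
      have hTP1 : ∀ i : ↥(T c₀), (i : FractionRing (MvPolynomial (Fin n ⊕ Fin n) K)) ∈
          IntermediateField.adjoin K (Set.range (fun w : Wc G c₀ => vv K n w)) :=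
        fun i => edgeBinoms_subset_adjoin K G c₀ _ (hTsub c₀ i.2)
      have hsum := fb2 (K := K) (F := FractionRing (MvPolynomial (Fin n ⊕ Fin n) K))
        (σ := Fin n ⊕ Fin n) (v := vv K n) (vv_ai K n) (Wc G c₀) (⋃ c ∈ s, Wc G c)
        (hWdisj c₀ s hc₀)
        (t₁ := ((↑) : ↥(T c₀) → FractionRing (MvPolynomial (Fin n ⊕ Fin n) K)))
        (t₂ := ((↑) : ↥(⋃ c ∈ s, T c) → FractionRing (MvPolynomial (Fin n ⊕ Fin n) K)))
        (hTai c₀) ih.1 hTP1 (fun i => ih.2 i.1 i.2)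
      have hranges : Set.range (Sum.elim ((↑) : ↥(T c₀) → _) ((↑) : ↥(⋃ c ∈ s, T c) → _))
          = (⋃ c ∈ insert c₀ s, T c) := by
        rw [Set.Sum.elim_range, Subtype.range_coe, Subtype.range_coe,
          Finset.set_biUnion_insert]
      have hmono : ∀ (W : Set (Fin n ⊕ Fin n)),
          W ⊆ (⋃ c ∈ insert c₀ s, Wc G c) →
          IntermediateField.adjoin K (Set.range (fun w : W => vv K n w)) ≤
            IntermediateField.adjoin K
              (Set.range (fun w : (⋃ c ∈ insert c₀ s, Wc G c) => vv K n w)) := by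
        intro W hWsub
        apply IntermediateField.adjoin.mono
        rintro _ ⟨⟨w, hw⟩, rfl⟩
        exact ⟨⟨w, hWsub hw⟩, rfl⟩
      constructor
      · have h6 := hsum.coe_range
        rwa [hranges] at h6
      · intro z hz
        rw [Finset.set_biUnion_insert] at hz
        rcases hz with hz | hz
        · refine hmono (Wc G c₀) ?_ (edgeBinoms_subset_adjoin K G c₀ z (hTsub c₀ hz))
          intro w hw
          exact Set.mem_biUnion (Finset.mem_insert_self c₀ s) hw
        · refine hmono _ ?_ (ih.2 z hz)
          intro w hw
          rw [Set.mem_iUnion₂] at hw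
          obtain ⟨c', hc', hwc'⟩ := hw
          exact Set.mem_biUnion (Finset.mem_insert_of_mem hc') hwc'
  have hUainf : AlgebraicIndependent K
      ((↑) : (⋃ c, T c) → FractionRing (MvPolynomial (Fin n ⊕ Fin n) K)) := by
    have h7 := (hUnion Finset.univ).1
    have he : (⋃ c ∈ (Finset.univ : Finset G.ConnectedComponent), T c) = ⋃ c, T c := by simp
    rwa [he] at h7
  have hTfinU : (⋃ c, T c).Finite := Set.finite_iUnion hTfin
  have hsubU : (⋃ c, T c) ⊆ edgeBinoms K G := by
    rw [edgeBinoms_union K G]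
    exact Set.iUnion_mono (fun c => hTsub c)
  have halgU : ∀ x ∈ edgeBinoms K G,
      IsAlgebraic (↥(IntermediateField.adjoin K (⋃ c, T c))) x := by
    intro x hx
    rw [edgeBinoms_union K G] at hx
    obtain ⟨c, hc⟩ := Set.mem_iUnion.1 hx
    refine isAlgebraic_mono ?_ (hTalg c x hc)
    intro w hw
    exact IntermediateField.adjoin.mono _ _ _ (Set.subset_iUnion T c) hw
  have hG : spread K G = Cardinal.mk (⋃ c, T c) := by
    show trdeg K (↥(IntermediateField.adjoin K (edgeBinoms K G))) = _
    exact trdeg_adjoin_eq _ _ hTfinU hsubU hUainf halgU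
  have hsumcard : ∀ s : Finset G.ConnectedComponent,
      (∑ c ∈ s, Cardinal.mk (T c)) = Cardinal.mk (⋃ c ∈ s, T c) := by
    intro s
    induction s using Finset.induction_on with
    | empty => simp
    | @insert c₀ s hc₀ ih =>
      rw [Finset.sum_insert hc₀, ih, Finset.set_biUnion_insert]
      have hdisj : Disjoint (T c₀) (⋃ c ∈ s, T c) := by
        rw [Set.disjoint_left]
        intro z hz hz'
        rw [Set.mem_iUnion₂] at hz'
        obtain ⟨c', hc', hzc'⟩ := hz'
        have hne : c₀ ≠ c' := fun h => hc₀ (h ▸ hc')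
        exact edgeBinoms_disj K G hne z (hTsub c₀ hz) (hTsub c' hzc')
      exact (Cardinal.mk_union_of_disjoint hdisj).symm
  rw [hG, finsum_eq_sum_of_fintype]
  rw [Finset.sum_congr rfl (fun c _ => hspread c)]
  rw [hsumcard Finset.univ]
  have he2 : (⋃ c ∈ (Finset.univ : Finset G.ConnectedComponent), T c) = ⋃ c, T c := by simp
  rw [he2]
end

section
/- For the complete graph K_n on n ≥ 2 vertices, the analytic spread of the binomial edge ideal satisfies ℓ(J_{K_n}) = 2n − 3. -/
open MvPolynomial

section Development

section FieldLemmas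

variable {K F : Type*} [Field K] [Field F] [Algebra K F]

/-- Transfer `IsAlgebraic` along a base-field hom compatible with the maps into `F`. -/
theorem isAlgebraic_transfer {k1 k2 : Type*} [Field k1] [Field k2] [Algebra k1 F] [Algebra k2 F]
    (f : k1 →+* k2) (hcomp : ∀ a, algebraMap k2 F (f a) = algebraMap k1 F a)
    {x : F} (h : IsAlgebraic k1 x) : IsAlgebraic k2 x := by
  obtain ⟨p, hp, hev⟩ := h
  refine ⟨p.map f, ?_, ?_⟩
  · intro h0
    exact hp (Polynomial.map_injective f f.injective (by simpa using h0))
  · rw [Polynomial.aeval_def, Polynomial.eval₂_map]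
    rw [Polynomial.aeval_def] at hev
    have : (algebraMap k2 F).comp f = algebraMap k1 F := RingHom.ext hcomp
    rw [this]
    exact hev

theorem isAlgebraic_transfer_set {k1 k2 : Type*} [Field k1] [Field k2] [Algebra k1 F]
    [Algebra k2 F] {E1 : IntermediateField k1 F} {E2 : IntermediateField k2 F}
    (h : (E1 : Set F) = (E2 : Set F)) {x : F} (hx : IsAlgebraic ↥E1 x) : IsAlgebraic ↥E2 x := by
  refine isAlgebraic_transfer
    { toFun := fun a => (⟨a.1, by rw [← SetLike.mem_coe, ← h]; exact a.2⟩ : ↥E2),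
      map_one' := rfl, map_mul' := fun _ _ => rfl,
      map_zero' := rfl, map_add' := fun _ _ => rfl } (fun a => rfl) hx

/-- Algebraic over the intermediate-field adjoin iff over the subalgebra adjoin. -/
theorem isAlgebraic_adjoin_field_iff (S : Set F) {x : F} :
    IsAlgebraic ↥(IntermediateField.adjoin K S) x ↔ IsAlgebraic ↥(Algebra.adjoin K S) x := by
  set A := Algebra.adjoin K S with hA
  set L := IntermediateField.adjoin K S with hL
  have hmem : ∀ a : ↥A, (a : F) ∈ L := fun a => by
    have := IntermediateField.algebra_adjoin_le_adjoin K S a.2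
    rwa [IntermediateField.mem_toSubalgebra] at this
  letI : Algebra ↥A ↥L :=
    (RingHom.codRestrict (A.val.toRingHom) L.toSubfield (fun a => hmem a)).toAlgebra
  haveI : IsScalarTower ↥A ↥L F := IsScalarTower.of_algebraMap_eq (fun a => rfl)
  have hinj : Function.Injective (algebraMap ↥A ↥L) := by
    intro a b hab
    have h2 := congrArg (Subtype.val : ↥L → F) hab
    exact Subtype.ext h2
  haveI : IsFractionRing ↥A ↥L := by
    refine ⟨?_, ?_, ?_⟩
    · rintro ⟨y, hy⟩
      rw [isUnit_iff_ne_zero]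
      intro h0
      have : y = 0 := by
        apply hinj
        rw [h0, map_zero]
      exact (mem_nonZeroDivisors_iff_ne_zero.mp hy) this
    · rintro ⟨z, hz⟩
      rw [hL, IntermediateField.mem_adjoin_iff] at hz
      obtain ⟨r, s, hrs⟩ := hz
      have key : ∀ q : MvPolynomial S K, (aeval (Subtype.val : S → F)) q ∈ A := by
        intro q
        have h1 : (aeval (Subtype.val : S → F)) q ∈
            Algebra.adjoin K (Set.range (Subtype.val : S → F)) := by
          rw [Algebra.adjoin_range_eq_range_aeval]
          exact ⟨q, rfl⟩
        rwa [Subtype.range_coe] at h1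
      have hr : (aeval (Subtype.val : S → F)) r ∈ A := key r
      have hs : (aeval (Subtype.val : S → F)) s ∈ A := key s
      by_cases h0 : (aeval (Subtype.val : S → F)) s = 0
      · refine ⟨⟨0, 1⟩, ?_⟩
        have : z = 0 := by rw [hrs, h0, div_zero]
        apply Subtype.ext
        simp [this]
      · have hs0 : (⟨_, hs⟩ : ↥A) ≠ 0 := by
          intro hc
          exact h0 (congrArg Subtype.val hc)
        refine ⟨⟨⟨_, hr⟩, ⟨⟨_, hs⟩, mem_nonZeroDivisors_iff_ne_zero.mpr hs0⟩⟩, ?_⟩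
        apply Subtype.ext
        show z * _ = _
        rw [hrs]
        exact div_mul_cancel₀ _ h0
    · intro a b hab
      exact ⟨1, by rw [hinj hab]⟩
  exact (IsFractionRing.isAlgebraic_iff ↥A ↥L F).symm

/-- One-step transitivity. -/
theorem isAlgebraic_trans_single {u x : F}
    (hx : IsAlgebraic ↥(IntermediateField.adjoin K {u}) x) (hu : IsAlgebraic K u) :
    IsAlgebraic K x := by
  haveI : FiniteDimensional K ↥(IntermediateField.adjoin K {u}) := IntermediateField.adjoin.finiteDimensional hu.isIntegral
  haveI : Algebra.IsIntegral K ↥(IntermediateField.adjoin K {u}) := Algebra.IsIntegral.of_finite _ _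
  exact (isIntegral_trans x hx.isIntegral).isAlgebraic

/-- Exchange lemma. -/
theorem exchange {u x : F} (h1 : IsAlgebraic ↥(IntermediateField.adjoin K {u}) x)
    (h2 : Transcendental K x) : IsAlgebraic ↥(IntermediateField.adjoin K {x}) u := by
  have h1' : IsAlgebraic ↥(Algebra.adjoin K {u}) x := (isAlgebraic_adjoin_field_iff {u}).1 h1
  have hx1 : AlgebraicIndependent K (fun _ : Fin 1 => x) :=
    algebraicIndependent_unique_type_iff.mpr h2
  by_contra hcon
  have hustr : Transcendental ↥(Algebra.adjoin K {x}) u := by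
    intro halg
    exact hcon ((isAlgebraic_adjoin_field_iff {x}).2 halg)
  have hpair : AlgebraicIndependent K (fun o : Option (Fin 1) => o.elim u (fun _ => x)) := by
    rw [hx1.option_iff_transcendental, Set.range_const]
    exact hustr
  have hswap : AlgebraicIndependent K (fun o : Option (Fin 1) => o.elim x (fun _ => u)) := by
    have h := hpair.comp (Equiv.swap none (some 0)) (Equiv.injective _)
    convert h using 1
    funext o
    match o with
    | none => simp [Equiv.swap_apply_left]
    | some i =>
      have : i = 0 := Subsingleton.elim _ _
      subst this
      simp [Equiv.swap_apply_right]
  have hu1 : AlgebraicIndependent K (fun _ : Fin 1 => u) :=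
    hswap.comp (fun i => some i) (Option.some_injective _)
  have hxtr := (hu1.option_iff_transcendental x).mp hswap
  rw [Set.range_const] at hxtr
  exact hxtr h1'

/-- Any member of an algebraically independent `Sum.elim` family is transcendental over the
field adjoin of the left part. -/
theorem transcendental_adjoin_of_indep {κ ι : Type*} {c : κ → F} {b : ι → F}
    (hind : AlgebraicIndependent K (Sum.elim c b)) (i0 : ι) :
    Transcendental ↥(IntermediateField.adjoin K (Set.range c)) (b i0) := by
  have hbase : AlgebraicIndependent K c := hind.comp Sum.inl Sum.inl_injective
  have hopt : AlgebraicIndependent K (fun o : Option κ => o.elim (b i0) c) := by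
    have hinj : Function.Injective (fun o : Option κ => o.elim (Sum.inr i0 : κ ⊕ ι) Sum.inl) := by
      intro o1 o2 h
      match o1, o2 with
      | none, none => rfl
      | some a, some b => simpa using h
      | none, some a => simp at h
      | some a, none => simp at h
    have h := hind.comp _ hinj
    convert h using 1
    funext o
    match o with
    | none => rfl
    | some a => rfl
  have htr := (hbase.option_iff_transcendental (b i0)).mp hopt
  intro halg
  exact htr ((isAlgebraic_adjoin_field_iff _).mp halg)

theorem isAlgebraic_adjoin_mono {S T : Set F} (hST : S ⊆ T) {x : F}
    (h : IsAlgebraic ↥(IntermediateField.adjoin K S) x) :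
    IsAlgebraic ↥(IntermediateField.adjoin K T) x := by
  refine isAlgebraic_transfer
    ((IntermediateField.inclusion (IntermediateField.adjoin.mono K S T hST)).toRingHom)
    (fun a => ?_) h
  simp [IntermediateField.algebraMap_apply]

end FieldLemmas

section MainCount
variable {K F : Type*} [Field K] [Field F] [Algebra K F]

theorem main_count (m : ℕ) :
    ∀ (ι κ : Type) [Fintype ι], Fintype.card ι = m →
    ∀ (c : κ → F) (b : ι → F) (S : Finset F),
      AlgebraicIndependent K (Sum.elim c b) →
      (∀ i, IsAlgebraic ↥(IntermediateField.adjoin K (↑S ∪ Set.range c)) (b i)) →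
      m ≤ S.card := by
  induction m with
  | zero => intro ι κ _ _ c b S _ _; exact Nat.zero_le _
  | succ m IH =>
    intro ι κ _ hcard c b S hind halg
    classical
    have hne : Nonempty ι := Fintype.card_pos_iff.mp (by omega)
    obtain ⟨i0⟩ := hne
    set b0 := b i0 with hb0
    have htr : Transcendental ↥(IntermediateField.adjoin K (Set.range c)) b0 :=
      transcendental_adjoin_of_indep hind i0
    let P : Finset F → Prop :=
      fun T => IsAlgebraic ↥(IntermediateField.adjoin K (↑T ∪ Set.range c)) b0
    have hSP : S ∈ S.powerset.filter P := by
      rw [Finset.mem_filter, Finset.mem_powerset]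
      exact ⟨Finset.Subset.refl S, halg i0⟩
    obtain ⟨T, hTmem, hTmin⟩ := Finset.exists_min_image _ Finset.card ⟨S, hSP⟩
    rw [Finset.mem_filter, Finset.mem_powerset] at hTmem
    obtain ⟨hTsub, hTalg0⟩ := hTmem
    have hTalg : IsAlgebraic ↥(IntermediateField.adjoin K (↑T ∪ Set.range c)) b0 := hTalg0
    have hTne : T ≠ ∅ := by
      intro h0
      have he : (↑T : Set F) ∪ Set.range c = Set.range c := by rw [h0]; simp
      rw [he] at hTalg
      exact htr hTalg
    obtain ⟨u, hu⟩ := Finset.nonempty_of_ne_empty hTne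
    set A : Set F := ↑(T.erase u) ∪ Set.range c with hA
    have h_min : ¬ IsAlgebraic ↥(IntermediateField.adjoin K A) b0 := by
      intro halg'
      have hmem' : T.erase u ∈ S.powerset.filter P := by
        rw [Finset.mem_filter, Finset.mem_powerset]
        exact ⟨(Finset.erase_subset u T).trans hTsub, halg'⟩
      have hle := hTmin _ hmem'
      have hlt : (T.erase u).card < T.card := by
        rw [Finset.card_erase_of_mem hu]
        have : 1 ≤ T.card := Finset.card_pos.mpr ⟨u, hu⟩
        omega
      omega
    have hseteq : (↑T : Set F) ∪ Set.range c = A ∪ {u} := by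
      conv_lhs => rw [← Finset.insert_erase hu]
      rw [Finset.coe_insert, hA]
      ext y
      simp only [Set.mem_union, Set.mem_insert_iff, Set.mem_singleton_iff, Finset.coe_erase,
        Set.mem_diff, Finset.mem_coe]
      tauto
    rw [hseteq] at hTalg
    set k' := ↥(IntermediateField.adjoin K A)
    have heq1 : ((IntermediateField.adjoin k' {u} : IntermediateField k' F) : Set F) =
        ((IntermediateField.adjoin K (A ∪ {u}) : IntermediateField K F) : Set F) := by
      rw [← IntermediateField.adjoin_adjoin_left K A {u}]
      rw [IntermediateField.coe_restrictScalars]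
    have hxalg' : IsAlgebraic ↥(IntermediateField.adjoin k' {u}) b0 :=
      isAlgebraic_transfer_set heq1.symm hTalg
    have hexch : IsAlgebraic ↥(IntermediateField.adjoin k' {b0}) u := exchange hxalg' h_min
    have heq2 : ((IntermediateField.adjoin k' {b0} : IntermediateField k' F) : Set F) =
        ((IntermediateField.adjoin K (A ∪ {b0}) : IntermediateField K F) : Set F) := by
      rw [← IntermediateField.adjoin_adjoin_left K A {b0}]
      rw [IntermediateField.coe_restrictScalars]
    have h_u : IsAlgebraic ↥(IntermediateField.adjoin K (A ∪ {b0})) u :=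
      isAlgebraic_transfer_set heq2 hexch
    set S₂ : Set F := ↑(S.erase u) ∪ insert b0 (Set.range c) with hS₂
    have h_u2 : IsAlgebraic ↥(IntermediateField.adjoin K S₂) u := by
      refine isAlgebraic_adjoin_mono ?_ h_u
      rintro y (⟨h | h⟩ | h)
      · exact Or.inl (Finset.mem_coe.mpr (Finset.erase_subset_erase u hTsub (Finset.mem_coe.mp h)))
      · exact Or.inr (Set.mem_insert_of_mem _ h)
      · exact Or.inr (Set.mem_insert_iff.mpr (Or.inl h))
    -- new families
    set c' : Option κ → F := fun o => o.elim b0 c with hc'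
    set b' : {i : ι // i ≠ i0} → F := fun i => b i.1 with hb'
    have hrangec' : Set.range c' = insert b0 (Set.range c) := by
      ext y
      constructor
      · rintro ⟨(_ | j), rfl⟩
        · exact Set.mem_insert _ _
        · exact Set.mem_insert_of_mem _ ⟨j, rfl⟩
      · rintro (h | ⟨j, rfl⟩)
        · exact ⟨none, h.symm⟩
        · exact ⟨some j, rfl⟩
    have hind' : AlgebraicIndependent K (Sum.elim c' b') := by
      set j : Option κ ⊕ {i : ι // i ≠ i0} → κ ⊕ ι :=
        Sum.elim (fun o => o.elim (Sum.inr i0) Sum.inl) (fun i => Sum.inr i.1) with hj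
      have hjinj : Function.Injective j := by
        rintro (o1 | i1) (o2 | i2) h
        · match o1, o2 with
          | none, none => rfl
          | some a, some b => simp [hj] at h; rw [h]
          | none, some a => simp [hj] at h
          | some a, none => simp [hj] at h
        · match o1 with
          | none => simp [hj] at h; exact absurd h.symm i2.2
          | some a => simp [hj] at h
        · match o2 with
          | none => simp [hj] at h; exact absurd h i1.2
          | some a => simp [hj] at h
        · simp [hj] at h; exact congrArg Sum.inr (Subtype.ext h)
      have h := hind.comp j hjinj
      convert h using 1
      funext o
      rcases o with (_ | _) | i <;> rfl
    have halg' : ∀ i : {i : ι // i ≠ i0},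
        IsAlgebraic ↥(IntermediateField.adjoin K (↑(S.erase u) ∪ Set.range c')) (b' i) := by
      intro i
      rw [hrangec']
      have hbi := halg i.1
      have h1 : IsAlgebraic ↥(IntermediateField.adjoin K (S₂ ∪ {u})) (b i.1) := by
        refine isAlgebraic_adjoin_mono ?_ hbi
        rintro y (h | h)
        · by_cases hy : y = u
          · exact Or.inr hy
          · exact Or.inl (Or.inl (Finset.mem_coe.mpr
              (Finset.mem_erase.mpr ⟨hy, Finset.mem_coe.mp h⟩)))
        · exact Or.inl (Or.inr (Set.mem_insert_of_mem _ h))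
      set k₂ := ↥(IntermediateField.adjoin K S₂)
      have heq3 : ((IntermediateField.adjoin k₂ {u} : IntermediateField k₂ F) : Set F) =
          ((IntermediateField.adjoin K (S₂ ∪ {u}) : IntermediateField K F) : Set F) := by
        rw [← IntermediateField.adjoin_adjoin_left K S₂ {u}]
        rw [IntermediateField.coe_restrictScalars]
      have h2 : IsAlgebraic ↥(IntermediateField.adjoin k₂ {u}) (b i.1) :=
        isAlgebraic_transfer_set heq3.symm h1
      exact isAlgebraic_trans_single h2 h_u2
    have hcard' : Fintype.card {i : ι // i ≠ i0} = m := by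
      have h1 : Fintype.card {i : ι // ¬ i = i0} = Fintype.card ι - Fintype.card {i : ι // i = i0} :=
        Fintype.card_subtype_compl _
      rw [Fintype.card_subtype_eq, hcard] at h1
      simpa using h1
    have hfin := IH _ (Option κ) hcard' c' b' (S.erase u) hind' halg'
    have husS : u ∈ S := hTsub hu
    rw [Finset.card_erase_of_mem husS] at hfin
    have : 1 ≤ S.card := Finset.card_pos.mpr ⟨u, husS⟩
    omega


end MainCount

section Glue
variable {K F : Type} [Field K] [Field F] [Algebra K F]

theorem trdeg_adjoin_eq (S : Set F) (ι : Type) [Fintype ι] (g : ι → F)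
    (hg : AlgebraicIndependent K g) (hrange : Set.range g ⊆ S)
    (hsub : S ⊆ ↑(IntermediateField.adjoin K (Set.range g))) :
    trdeg K ↥(IntermediateField.adjoin K S) = (Fintype.card ι : Cardinal) := by
  classical
  set N := Fintype.card ι with hN
  set L := IntermediateField.adjoin K S with hL
  set E := IntermediateField.adjoin K (Set.range g) with hE
  have hLE : L ≤ E := IntermediateField.adjoin_le_iff.mpr hsub
  have hvalinj : Function.Injective ⇑(L.val) := Subtype.val_injective
  -- upper bound
  have upper : ∀ s : {s : Set ↥L // AlgebraicIndependent K ((↑) : s → ↥L)},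
      Cardinal.mk s.1 ≤ (N : Cardinal) := by
    rintro ⟨s, hs⟩
    by_contra hcon
    push_neg at hcon
    have hsucc : ((N + 1 : ℕ) : Cardinal) ≤ Cardinal.mk s := by
      rw [Cardinal.nat_succ]
      exact Order.succ_le_of_lt hcon
    rw [← Cardinal.mk_fin (N + 1), Cardinal.le_def] at hsucc
    obtain ⟨e⟩ := hsucc
    set b : Fin (N + 1) → F := fun i => ((e i : ↥L) : F) with hb
    have hbind : AlgebraicIndependent K b := by
      have h1 : AlgebraicIndependent K ((↑) ∘ e : Fin (N + 1) → ↥L) := hs.comp e e.injective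
      exact (AlgHom.algebraicIndependent_iff L.val hvalinj).mpr h1
    set c : Empty → F := fun x => x.elim with hc
    have hindSum : AlgebraicIndependent K (Sum.elim c b) := by
      have h2 := (algebraicIndependent_equiv (Equiv.emptySum Empty (Fin (N + 1)))
        (f := b)).mpr hbind
      convert h2 using 1
      funext x
      rcases x with x | i
      · exact x.elim
      · rfl
    set Sfin : Finset F := Finset.univ.image g with hSfin
    have hSfineq : (↑Sfin : Set F) = Set.range g := by
      rw [hSfin]
      simp
    have halgb : ∀ i, IsAlgebraic ↥(IntermediateField.adjoin K (↑Sfin ∪ Set.range c)) (b i) := by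
      intro i
      have hm : b i ∈ IntermediateField.adjoin K (↑Sfin ∪ Set.range c) := by
        have h3 : b i ∈ E := hLE (e i : ↥L).2
        have h4 : (↑Sfin : Set F) ∪ Set.range c = Set.range g := by
          rw [hSfineq]
          have : Set.range c = ∅ := Set.range_eq_empty c
          rw [this, Set.union_empty]
        rw [h4]
        exact h3
      refine ⟨Polynomial.X - Polynomial.C ⟨b i, hm⟩, Polynomial.X_sub_C_ne_zero _, ?_⟩
      rw [map_sub, Polynomial.aeval_X, Polynomial.aeval_C, IntermediateField.algebraMap_apply,
        sub_self]
    have hcount := main_count (N + 1) (Fin (N + 1)) Empty (by simp) c b Sfin hindSum halgb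
    have hcard_le : Sfin.card ≤ N := by
      calc Sfin.card ≤ Finset.univ.card := Finset.card_image_le
      _ = N := by rw [Finset.card_univ]
    omega
  -- lower bound element
  have hmemL : ∀ i, g i ∈ L := fun i => IntermediateField.subset_adjoin K S (hrange ⟨i, rfl⟩)
  set g' : ι → ↥L := fun i => ⟨g i, hmemL i⟩ with hg'def
  have hg' : AlgebraicIndependent K g' := by
    refine (AlgHom.algebraicIndependent_iff L.val hvalinj).mp ?_
    exact hg
  have hginj : Function.Injective g' := hg'.injective
  have hmkrange : Cardinal.mk ↥(Set.range g') = (N : Cardinal) := by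
    rw [Cardinal.mk_range_eq g' hginj, Cardinal.mk_fintype]
  refine le_antisymm (ciSup_le' upper) ?_
  have hbdd : BddAbove (Set.range fun s : {s : Set ↥L // AlgebraicIndependent K ((↑) : s → ↥L)} =>
      Cardinal.mk s.1) := by
    refine ⟨(N : Cardinal), ?_⟩
    rintro x ⟨s, rfl⟩
    exact upper s
  have hle := le_ciSup hbdd (⟨Set.range g', hg'.coe_range⟩ :
    {s : Set ↥L // AlgebraicIndependent K ((↑) : s → ↥L)})
  rw [hmkrange] at hle
  exact hle

end Glue

section Concrete

theorem indep_of_comp {R A B : Type*} [CommRing R] [CommRing A] [CommRing B]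
    [Algebra R A] [Algebra R B] {ι : Type*} {x : ι → A} (f : A →ₐ[R] B)
    (h : AlgebraicIndependent R (⇑f ∘ x)) : AlgebraicIndependent R x := by
  rw [algebraicIndependent_iff_injective_aeval] at h ⊢
  have hcomp : aeval (⇑f ∘ x) = f.comp (aeval x) := by
    rw [comp_aeval]
    rfl
  rw [hcomp, AlgHom.coe_comp] at h
  exact h.of_comp

variable (K : Type) [Field K] (n : ℕ) (hn : 2 ≤ n)

local notation "A" => MvPolynomial (Fin n ⊕ Fin n) K
local notation "FF" => FractionRing (MvPolynomial (Fin n ⊕ Fin n) K)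

noncomputable def dd (i j : Fin n) : MvPolynomial (Fin n ⊕ Fin n) K :=
  X (Sum.inl i) * X (Sum.inr j) - X (Sum.inl j) * X (Sum.inr i)

noncomputable def phi : MvPolynomial (Fin n ⊕ Fin n) K →ₐ[K] FF :=
  IsScalarTower.toAlgHom K _ _

theorem phi_inj : Function.Injective ⇑(phi K n) := IsFractionRing.injective _ _

section WithHn
include hn

def oo : Fin n := ⟨0, by omega⟩
def ll : Fin n := ⟨1, by omega⟩
def emb (j : Fin (n - 2)) : Fin n := ⟨j.1 + 2, by omega⟩

theorem emb_inj : Function.Injective (emb n hn) := by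
  intro a b h
  have := congrArg Fin.val h
  simp only [emb] at this
  exact Fin.ext (by omega)

theorem oo_ne_ll : oo n hn ≠ ll n hn := by
  simp [oo, ll, Fin.ext_iff]

theorem emb_ne_oo (j : Fin (n - 2)) : emb n hn j ≠ oo n hn := by
  simp [emb, oo, Fin.ext_iff]

theorem emb_ne_ll (j : Fin (n - 2)) : emb n hn j ≠ ll n hn := by
  simp [emb, ll, Fin.ext_iff]

end WithHn

/-- index type for the generators -/
abbrev genIdx : Type := Fin 1 ⊕ Fin (n - 2) ⊕ Fin (n - 2)

noncomputable def gA (hn : 2 ≤ n) : genIdx n → MvPolynomial (Fin n ⊕ Fin n) K :=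
  Sum.elim (fun _ => dd K n (oo n hn) (ll n hn))
    (Sum.elim (fun j => dd K n (oo n hn) (emb n hn j))
      (fun j => dd K n (ll n hn) (emb n hn j)))

noncomputable def gg (hn : 2 ≤ n) : genIdx n → FF := fun i => phi K n (gA K n hn i)

section Indep
variable (hn : 2 ≤ n)

theorem gg_indep : AlgebraicIndependent K (gg K n hn) := by
  classical
  -- the target variable family
  set e0 : genIdx n → Fin n ⊕ Fin n :=
    Sum.elim (fun _ => Sum.inr (ll n hn))
      (Sum.elim (fun j => Sum.inr (emb n hn j)) (fun j => Sum.inl (emb n hn j))) with he0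
  have he0inj : Function.Injective e0 := by
    rintro (a | b | c) (a' | b' | c') h <;>
      simp only [he0, Sum.elim_inl, Sum.elim_inr] at h
    · exact congrArg Sum.inl (Subsingleton.elim a a')
    · exact absurd (Sum.inr_injective h).symm (emb_ne_ll n hn b')
    · simp at h
    · exact absurd (Sum.inr_injective h) (emb_ne_ll n hn b)
    · exact congrArg (fun t => (Sum.inr (Sum.inl t) : genIdx n)) (emb_inj n hn (Sum.inr_injective h))
    · simp at h
    · simp at h
    · simp at h
    · exact congrArg (fun t => (Sum.inr (Sum.inr t) : genIdx n)) (emb_inj n hn (Sum.inl_injective h))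
  have hX : AlgebraicIndependent K (X ∘ e0 : genIdx n → MvPolynomial (Fin n ⊕ Fin n) K) :=
    (MvPolynomial.algebraicIndependent_X _ _).comp e0 he0inj
  have hXF : AlgebraicIndependent K (⇑(phi K n) ∘ (X ∘ e0)) :=
    (AlgHom.algebraicIndependent_iff (phi K n) (phi_inj K n)).mpr hX
  -- the specialization
  have hy1 : phi K n (X (Sum.inr (ll n hn))) ≠ 0 := by
    intro h0
    exact MvPolynomial.X_ne_zero _ (phi_inj K n (by rw [h0, map_zero]))
  set v : Fin n ⊕ Fin n → FF :=
    Sum.elim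
      (fun i => if i = oo n hn then 1 else if i = ll n hn then 0
        else -(phi K n (X (Sum.inl i)) * (phi K n (X (Sum.inr (ll n hn))))⁻¹))
      (fun i => if i = oo n hn then 0 else phi K n (X (Sum.inr i))) with hv
  set ζ : MvPolynomial (Fin n ⊕ Fin n) K →ₐ[K] FF := aeval v with hζ
  have hcomp : ⇑ζ ∘ (gA K n hn) = ⇑(phi K n) ∘ (X ∘ e0) := by
    funext i
    rcases i with a | b | c
    · show ζ (dd K n (oo n hn) (ll n hn)) = phi K n (X (Sum.inr (ll n hn)))
      simp [dd, hζ, hv, oo_ne_ll n hn, Ne.symm (oo_ne_ll n hn)]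
    · show ζ (dd K n (oo n hn) (emb n hn b)) = phi K n (X (Sum.inr (emb n hn b)))
      simp [dd, hζ, hv, oo_ne_ll n hn, Ne.symm (oo_ne_ll n hn), emb_ne_oo n hn b,
        emb_ne_ll n hn b]
    · show ζ (dd K n (ll n hn) (emb n hn c)) = phi K n (X (Sum.inl (emb n hn c)))
      simp [dd, hζ, hv, oo_ne_ll n hn, Ne.symm (oo_ne_ll n hn), emb_ne_oo n hn c,
        emb_ne_ll n hn c]
      field_simp
  have hgA : AlgebraicIndependent K (gA K n hn) := by
    refine indep_of_comp ζ ?_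
    rw [hcomp]
    exact hXF
  exact (AlgHom.algebraicIndependent_iff (phi K n) (phi_inj K n)).mpr hgA

end Indep

section Membership
include hn

theorem dd_self (i : Fin n) : dd K n i i = 0 := by simp [dd]

theorem dd_swap (i j : Fin n) : dd K n j i = -(dd K n i j) := by
  simp only [dd]; ring

theorem dd_plucker (i j : Fin n) :
    dd K n i j * dd K n (oo n hn) (ll n hn) =
      dd K n (oo n hn) i * dd K n (ll n hn) j - dd K n (oo n hn) j * dd K n (ll n hn) i := by
  simp only [dd]; ring

theorem dd01_ne_zero : dd K n (oo n hn) (ll n hn) ≠ 0 := by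
  intro h
  have hev := congrArg (MvPolynomial.eval
    (Sum.elim (fun t : Fin n => if t = oo n hn then (1 : K) else 0)
      (fun t : Fin n => if t = ll n hn then (1 : K) else 0))) h
  simp [dd, oo_ne_ll n hn, Ne.symm (oo_ne_ll n hn)] at hev

theorem phi_dd01_ne_zero : phi K n (dd K n (oo n hn) (ll n hn)) ≠ 0 := by
  intro h
  exact dd01_ne_zero K n hn (phi_inj K n (by rw [h, map_zero]))

theorem mem_adjoin_gg (i j : Fin n) :
    phi K n (dd K n i j) ∈ IntermediateField.adjoin K (Set.range (gg K n hn)) := by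
  set M := IntermediateField.adjoin K (Set.range (gg K n hn)) with hM
  have hg_mem : ∀ idx, gg K n hn idx ∈ M :=
    fun idx => IntermediateField.subset_adjoin _ _ ⟨idx, rfl⟩
  have h01 : phi K n (dd K n (oo n hn) (ll n hn)) ∈ M := hg_mem (Sum.inl 0)
  have hrow : ∀ m : Fin n,
      phi K n (dd K n (oo n hn) m) ∈ M ∧ phi K n (dd K n (ll n hn) m) ∈ M := by
    intro m
    by_cases h0 : m = oo n hn
    · subst h0
      constructor
      · rw [dd_self K n hn, map_zero]; exact zero_mem M
      · rw [dd_swap K n hn, map_neg]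
        exact neg_mem h01
    by_cases h1 : m = ll n hn
    · subst h1
      constructor
      · exact h01
      · rw [dd_self K n hn, map_zero]; exact zero_mem M
    have hm2 : 2 ≤ m.1 := by
      rcases Nat.lt_or_ge m.1 2 with h | h
      · exfalso
        interval_cases hv : m.1
        · exact h0 (Fin.ext (by simpa [oo] using hv))
        · exact h1 (Fin.ext (by simpa [ll] using hv))
      · exact h
    set j0 : Fin (n - 2) := ⟨m.1 - 2, by omega⟩ with hj0
    have hemb : emb n hn j0 = m := Fin.ext (by simp [emb, hj0]; omega)
    constructor
    · have := hg_mem (Sum.inr (Sum.inl j0))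
      rwa [show gg K n hn (Sum.inr (Sum.inl j0)) =
        phi K n (dd K n (oo n hn) (emb n hn j0)) from rfl, hemb] at this
    · have := hg_mem (Sum.inr (Sum.inr j0))
      rwa [show gg K n hn (Sum.inr (Sum.inr j0)) =
        phi K n (dd K n (ll n hn) (emb n hn j0)) from rfl, hemb] at this
  have key : phi K n (dd K n i j) =
      (phi K n (dd K n (oo n hn) i) * phi K n (dd K n (ll n hn) j) -
        phi K n (dd K n (oo n hn) j) * phi K n (dd K n (ll n hn) i)) /
        phi K n (dd K n (oo n hn) (ll n hn)) := by
    rw [eq_div_iff (phi_dd01_ne_zero K n hn), ← map_mul, dd_plucker K n hn, map_sub,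
      map_mul, map_mul]
  rw [key]
  exact div_mem (sub_mem (mul_mem (hrow i).1 (hrow j).2) (mul_mem (hrow j).1 (hrow i).2)) h01

theorem range_gg_subset :
    Set.range (gg K n hn) ⊆ edgeBinoms K (⊤ : SimpleGraph (Fin n)) := by
  rintro z ⟨idx, rfl⟩
  rcases idx with a | b | c
  · exact ⟨oo n hn, ll n hn, by simpa using oo_ne_ll n hn, rfl⟩
  · exact ⟨oo n hn, emb n hn b, by simpa using Ne.symm (emb_ne_oo n hn b), rfl⟩
  · exact ⟨ll n hn, emb n hn c, by simpa using Ne.symm (emb_ne_ll n hn c), rfl⟩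

theorem edgeBinoms_subset :
    edgeBinoms K (⊤ : SimpleGraph (Fin n)) ⊆
      ↑(IntermediateField.adjoin K (Set.range (gg K n hn))) := by
  rintro z ⟨i, j, hadj, rfl⟩
  exact mem_adjoin_gg K n hn i j

theorem card_genIdx : Fintype.card (genIdx n) = 2 * n - 3 := by
  simp only [genIdx, Fintype.card_sum, Fintype.card_fin]
  omega

end Membership
end Concrete

end Development

/-- For the complete graph `Kₙ` on `n ≥ 2` vertices, `ℓ(J_{Kₙ}) = 2n − 3`. -/
theorem spread_completeGraph
    (K : Type) [Field K] [Infinite K] (n : ℕ) (hn : 2 ≤ n) :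
    spread K (⊤ : SimpleGraph (Fin n)) = ((2 * n - 3 : ℕ) : Cardinal) := by
  have h := trdeg_adjoin_eq (K := K)
    (F := FractionRing (MvPolynomial (Fin n ⊕ Fin n) K))
    (edgeBinoms K (⊤ : SimpleGraph (Fin n))) (genIdx n) (gg K n hn)
    (gg_indep K n hn) (range_gg_subset K n hn) (edgeBinoms_subset K n hn)
  show trdeg K ↥(IntermediateField.adjoin K (edgeBinoms K (⊤ : SimpleGraph (Fin n)))) = _
  rw [h, card_genIdx n hn]
end

section
/- Let G be a graph on n−1 ≥ 1 vertices and let G' be obtained from G by adding a leaf, i.e., a new vertex n together with a single edge {i, n} for some vertex i of G. Then ℓ(J_{G'}) = ℓ(J_G) + 1. -/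
open MvPolynomial

open IntermediateField

section Transfer

/-- Transfer `IsAlgebraic` along a commuting square of ring homs. -/
theorem isAlgebraic_transfer_s11 {R S E E' : Type*} [CommRing R] [CommRing S]
    [CommRing E] [CommRing E'] [Algebra R E] [Algebra S E']
    (ι : R →+* S) (hι : Function.Injective ι) (φ : E →+* E')
    (hcomp : (algebraMap S E').comp ι = φ.comp (algebraMap R E)) {a : E}
    (h : IsAlgebraic R a) : IsAlgebraic S (φ a) := by
  obtain ⟨p, hp, hpa⟩ := h
  refine ⟨p.map ι, (Polynomial.map_ne_zero_iff hι).2 hp, ?_⟩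
  rw [Polynomial.aeval_def, Polynomial.eval₂_map, hcomp, ← Polynomial.hom_eval₂,
    ← Polynomial.aeval_def, hpa, map_zero]

/-- Inclusion ring hom between intermediate fields over possibly different base fields. -/
def ifIncl {K M E : Type*} [Field K] [Field M] [Field E] [Algebra K E] [Algebra M E]
    (N₁ : IntermediateField K E) (N₂ : IntermediateField M E)
    (h : (N₁ : Set E) ⊆ (N₂ : Set E)) : N₁ →+* N₂ where
  toFun x := ⟨x.1, h x.2⟩
  map_one' := rfl
  map_mul' _ _ := rfl
  map_zero' := rfl
  map_add' _ _ := rfl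

theorem ifIncl_injective {K M E : Type*} [Field K] [Field M] [Field E] [Algebra K E] [Algebra M E]
    (N₁ : IntermediateField K E) (N₂ : IntermediateField M E)
    (h : (N₁ : Set E) ⊆ (N₂ : Set E)) : Function.Injective (ifIncl N₁ N₂ h) := by
  intro x y hxy
  exact Subtype.ext (congrArg (Subtype.val : N₂ → E) hxy)

/-- `IsAlgebraic` over a smaller intermediate field implies over a larger one
(even over a different base field). -/
theorem isAlgebraic_of_le {K M E : Type*} [Field K] [Field M] [Field E] [Algebra K E] [Algebra M E]
    {N₁ : IntermediateField K E} {N₂ : IntermediateField M E}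
    (h : (N₁ : Set E) ⊆ (N₂ : Set E)) {a : E}
    (ha : IsAlgebraic N₁ a) : IsAlgebraic N₂ a := by
  have := isAlgebraic_transfer_s11 (ifIncl N₁ N₂ h) (ifIncl_injective N₁ N₂ h) (RingHom.id E)
    (by ext x; rfl) ha
  simpa using this

end Transfer

section Bridge

variable {K E : Type*} [Field K] [Field E] [Algebra K E]

set_option maxHeartbeats 1000000 in
set_option synthInstance.maxHeartbeats 400000 in
/-- An element is algebraic over `Algebra.adjoin K s` iff it is algebraic over
the intermediate field `IntermediateField.adjoin K s`. -/
theorem isAlgebraic_adjoin_ring_iff_field (s : Set E) (a : E) :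
    IsAlgebraic (Algebra.adjoin K s) a ↔ IsAlgebraic (adjoin K s) a := by
  set A := Algebra.adjoin K s with hA
  have hginj : Function.Injective (A.val) := Subtype.val_injective
  set e : FractionRing A →ₐ[K] E := IsFractionRing.liftAlgHom hginj with he
  have hrange : e.fieldRange = adjoin K s :=
    IsFractionRing.liftAlgHom_fieldRange_eq_of_range_eq hginj (Subalgebra.range_val A)
  have he_app : ∀ x : A, e (algebraMap A (FractionRing A) x) = x := fun x =>
    IsFractionRing.lift_algebraMap (g := (A.val : A →+* E)) hginj x
  letI : Algebra (FractionRing A) E := e.toRingHom.toAlgebra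
  haveI : IsScalarTower A (FractionRing A) E :=
    IsScalarTower.of_algebraMap_eq (fun x => (he_app x).symm)
  rw [IsFractionRing.isAlgebraic_iff A (FractionRing A) E]
  have hmem : ∀ z : FractionRing A, e z ∈ adjoin K s := by
    intro z; rw [← hrange]; exact ⟨z, rfl⟩
  set g₀ : FractionRing A →+* (adjoin K s) :=
    (e.toRingHom).codRestrict (adjoin K s).toSubring hmem with hg₀
  have hg₀inj : Function.Injective g₀ := by
    intro x y hxy
    exact e.toRingHom.injective (congrArg Subtype.val hxy)
  have hg₀surj : Function.Surjective g₀ := by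
    intro x
    have : (x : E) ∈ e.fieldRange := hrange.symm ▸ x.2
    obtain ⟨z, hz⟩ := this
    exact ⟨z, Subtype.ext hz⟩
  constructor
  · intro h
    have := isAlgebraic_transfer_s11 g₀ hg₀inj (RingHom.id E) (by ext x; rfl) h
    simpa using this
  · intro h
    set ε := RingEquiv.ofBijective g₀ ⟨hg₀inj, hg₀surj⟩ with hε
    have hcomp : (algebraMap (FractionRing A) E).comp (ε.symm : (adjoin K s) →+* FractionRing A)
        = (RingHom.id E).comp (algebraMap (adjoin K s) E) := by
      ext x
      have : g₀ (ε.symm x) = x := ε.apply_symm_apply x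
      have := congrArg Subtype.val this
      exact this
    have := isAlgebraic_transfer_s11 (ε.symm : (adjoin K s) →+* FractionRing A)
      ε.symm.injective (RingHom.id E) hcomp h
    simpa using this

/-- Transcendence transfers. -/
theorem transcendental_adjoin_ring_iff_field (s : Set E) (a : E) :
    Transcendental (Algebra.adjoin K s) a ↔ Transcendental (adjoin K s) a :=
  not_congr (isAlgebraic_adjoin_ring_iff_field s a)

theorem isAlgebraic_adjoin_mono_s11 {s t : Set E} (h : s ⊆ t) {a : E}
    (ha : IsAlgebraic (adjoin K s) a) : IsAlgebraic (adjoin K t) a :=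
  isAlgebraic_of_le (by exact_mod_cast IntermediateField.adjoin.mono K s t h) ha

/-- A member of an intermediate field is algebraic over it. -/
theorem isAlgebraic_of_mem' {M : Type*} [Field M] [Algebra M E]
    (N : IntermediateField M E) {a : E} (ha : a ∈ N) : IsAlgebraic N a := by
  have := isAlgebraic_algebraMap (R := N) (A := E) ⟨a, ha⟩
  simpa using this

/-- Elements of an algebraic intermediate field are algebraic. -/
theorem isAlgebraic_of_mem_isAlgebraic {M : Type*} [Field M] [Algebra M E]
    (N : IntermediateField M E) [Algebra.IsAlgebraic M N] {a : E} (ha : a ∈ N) :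
    IsAlgebraic M a := by
  have h0 : IsAlgebraic M (⟨a, ha⟩ : N) := Algebra.IsAlgebraic.isAlgebraic _
  have := isAlgebraic_transfer_s11 (RingHom.id M) Function.injective_id
    (algebraMap N E : N →+* E) (by rw [RingHom.comp_id]; exact (IsScalarTower.algebraMap_eq M N E).symm) h0
  simpa using this

/-- Transitivity: if `y` is algebraic over `adjoin K s` and `a` algebraic over
`adjoin K (insert y s)`, then `a` is algebraic over `adjoin K s`. -/
theorem isAlgebraic_insert_trans {s : Set E} {y a : E}
    (hy : IsAlgebraic (adjoin K s) y) (ha : IsAlgebraic (adjoin K (insert y s)) a) :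
    IsAlgebraic (adjoin K s) a := by
  set M := adjoin K s
  haveI : Algebra.IsAlgebraic M M⟮y⟯ :=
    isAlgebraic_adjoin_simple (isAlgebraic_iff_isIntegral.1 hy)
  have hsets : (adjoin K (insert y s) : Set E) = ((M⟮y⟯ : IntermediateField M E) : Set E) := by
    have : restrictScalars K (adjoin M {y}) = adjoin K (s ∪ {y}) :=
      adjoin_adjoin_left K s {y}
    rw [Set.union_singleton] at this
    rw [← this]
    rfl
  have ha' : IsAlgebraic (M⟮y⟯) a := isAlgebraic_of_le (le_of_eq hsets) ha
  haveI : Algebra.IsIntegral M M⟮y⟯ := Algebra.isAlgebraic_iff_isIntegral.1 ‹_›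
  have : IsIntegral M a := isIntegral_trans (A := M⟮y⟯) a (isAlgebraic_iff_isIntegral.1 ha')
  exact this.isAlgebraic

/-- If every element of `S` is algebraic over `adjoin K T`, then every element of
`adjoin K S` is algebraic over `adjoin K T`. -/
theorem isAlgebraic_adjoin_of_forall {S T : Set E}
    (h : ∀ a ∈ S, IsAlgebraic (adjoin K T) a) {z : E} (hz : z ∈ adjoin K S) :
    IsAlgebraic (adjoin K T) z := by
  set M₀ := adjoin K T
  haveI : Algebra.IsAlgebraic M₀ (adjoin M₀ S) :=
    isAlgebraic_adjoin (fun x hx => isAlgebraic_iff_isIntegral.1 (h x hx))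
  have hz' : z ∈ adjoin M₀ S := by
    have hle : adjoin K S ≤ restrictScalars K (adjoin M₀ S) := by
      rw [adjoin_le_iff]
      intro x hx
      exact subset_adjoin M₀ S hx
    exact hle hz
  exact isAlgebraic_of_mem_isAlgebraic (adjoin M₀ S) hz'

end Bridge

section Exchange

variable {K E : Type*} [Field K] [Field E] [Algebra K E]

/-- Algebraic independence of an inserted set. -/
theorem algebraicIndependent_insert_iff {s : Set E} {a : E} (ha : a ∉ s) :
    AlgebraicIndependent K ((↑) : ↥(insert a s) → E) ↔
      AlgebraicIndependent K ((↑) : s → E) ∧ Transcendental (Algebra.adjoin K s) a := by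
  classical
  have hcomp : (fun o : Option s => o.elim a ((↑) : s → E)) ∘ (Set.subtypeInsertEquivOption ha)
      = ((↑) : ↥(insert a s) → E) := by
    funext x
    by_cases h : ↑x = a <;> simp [Set.subtypeInsertEquivOption, h]
  have hiff := algebraicIndependent_equiv' (R := K) (A := E) (Set.subtypeInsertEquivOption ha)
    (f := fun o : Option s => o.elim a ((↑) : s → E)) hcomp
  constructor
  · intro h
    have hs : AlgebraicIndependent K ((↑) : s → E) :=
      h.mono (Set.subset_insert a s)
    have hopt : AlgebraicIndependent K (fun o : Option s => o.elim a ((↑) : s → E)) :=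
      hiff.1 h
    have := (hs.option_iff_transcendental a).1 hopt
    rw [Subtype.range_coe] at this
    exact ⟨hs, this⟩
  · rintro ⟨hs, ht⟩
    have ht' : Transcendental (Algebra.adjoin K (Set.range ((↑) : s → E))) a := by
      rw [Subtype.range_coe]; exact ht
    exact hiff.2 ((hs.option_iff_transcendental a).2 ht')

set_option maxHeartbeats 1000000 in
set_option synthInstance.maxHeartbeats 400000 in
/-- The exchange step: if `x` is algebraic over `K(insert y s)` but transcendental over
`K(s)`, then `y` is algebraic over `K(insert x s)`. -/
theorem exchange_step {s : Set E} {x y : E}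
    (hx : IsAlgebraic (adjoin K (insert y s)) x)
    (hxs : Transcendental (adjoin K s) x) :
    IsAlgebraic (adjoin K (insert x s)) y := by
  by_contra hcon
  set M := adjoin K s
  -- sets: adjoin K (insert c s) = adjoin M {c}
  have hsets : ∀ c : E, (adjoin K (insert c s) : Set E)
      = ((adjoin M {c} : IntermediateField M E) : Set E) := by
    intro c
    have h1 : restrictScalars K (adjoin M {c}) = adjoin K (s ∪ {c}) :=
      adjoin_adjoin_left K s {c}
    rw [Set.union_singleton] at h1
    rw [← h1]
    rfl
  -- x is algebraic over M⟮y⟯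
  have hx' : IsAlgebraic (adjoin M {y}) x := isAlgebraic_of_le (le_of_eq (hsets y)) hx
  -- y is transcendental over M⟮x⟯, hence over Algebra.adjoin M {x}
  have hy1 : Transcendental (adjoin M {x}) y := by
    intro h
    exact hcon (isAlgebraic_of_le (le_of_eq (hsets x).symm) h)
  have hy2 : Transcendental (Algebra.adjoin M {x}) y :=
    (transcendental_adjoin_ring_iff_field {x} y).2 hy1
  -- x is transcendental over M
  have hxM : Transcendental M x := hxs
  have ind_x : AlgebraicIndependent M (fun _ : Unit => x) :=
    algebraicIndependent_unique_type_iff.2 hxM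
  have hrange : Set.range (fun _ : Unit => x) = {x} := Set.range_const
  have ind_pair : AlgebraicIndependent M (fun o : Option Unit => o.elim y (fun _ => x)) := by
    refine (ind_x.option_iff_transcendental y).2 ?_
    rw [hrange]
    exact hy2
  -- reorder the pair
  have hswap : (fun o : Option Unit => o.elim x (fun _ => y)) ∘ (Equiv.swap none (some ()))
      = (fun o : Option Unit => o.elim y (fun _ => x)) := by
    funext o
    match o with
    | none => simp
    | some () => simp
  have ind_pair' : AlgebraicIndependent M (fun o : Option Unit => o.elim x (fun _ => y)) :=
    (algebraicIndependent_equiv' (Equiv.swap none (some ())) hswap).1 ind_pair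
  have ind_y : AlgebraicIndependent M (fun _ : Unit => y) := by
    have := ind_pair'.comp (fun u : Unit => some u) (fun a b h => rfl)
    exact this
  have htrans := (ind_y.option_iff_transcendental x).1 ind_pair'
  rw [Set.range_const] at htrans
  exact htrans ((isAlgebraic_adjoin_ring_iff_field {y} x).2 hx')

end Exchange

section Steinitz

variable {K E : Type*} [Field K] [Field E] [Algebra K E]

theorem isAlgebraic_ring_adjoin_mono {s t : Set E} (h : s ⊆ t) {a : E}
    (ha : IsAlgebraic (Algebra.adjoin K s) a) : IsAlgebraic (Algebra.adjoin K t) a := by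
  have := isAlgebraic_transfer_s11 ((Subalgebra.inclusion (Algebra.adjoin_mono h)) :
      Algebra.adjoin K s →ₐ[K] Algebra.adjoin K t).toRingHom
    (Subalgebra.inclusion_injective _) (RingHom.id E) (by ext x; rfl) ha
  simpa using this

set_option maxHeartbeats 1000000 in
theorem card_le_of_algIndep_finset [DecidableEq E] :
    ∀ (N : ℕ) (t u : Finset E), (u \ t).card ≤ N →
      AlgebraicIndependent K ((↑) : ↥(u : Set E) → E) →
      (∀ x ∈ u, IsAlgebraic (adjoin K (t : Set E)) x) → u.card ≤ t.card := by
  classical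
  intro N
  induction N with
  | zero =>
      intro t u hN hind halg
      have hsub : u ⊆ t := by
        intro z hz
        by_contra hzt
        have hmem : z ∈ u \ t := Finset.mem_sdiff.2 ⟨hz, hzt⟩
        have := Finset.card_pos.2 ⟨z, hmem⟩
        omega
      exact Finset.card_le_card hsub
  | succ N ih =>
      intro t u hN hind halg
      by_cases hsub : u ⊆ t
      · exact Finset.card_le_card hsub
      obtain ⟨x, hxu, hxt⟩ : ∃ x, x ∈ u ∧ x ∉ t := by
        obtain ⟨x, hx, hx'⟩ := Finset.not_subset.1 hsub; exact ⟨x, hx, hx'⟩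
      -- x is transcendental over K(u ∩ t)
      have hx_tr_ut : Transcendental (adjoin K ((u ∩ t : Finset E) : Set E)) x := by
        have h1 : AlgebraicIndependent K ((↑) : ↥(insert x ((u : Set E) \ {x})) → E) := by
          have hins : insert x ((u : Set E) \ {x}) = (u : Set E) := by
            rw [Set.insert_diff_singleton, Set.insert_eq_self.2 (by exact_mod_cast hxu)]
          rw [hins]; exact hind
        have h2 := ((algebraicIndependent_insert_iff (by simp)).1 h1).2
        intro halgx
        apply h2
        have h3 : IsAlgebraic (Algebra.adjoin K ((u ∩ t : Finset E) : Set E)) x :=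
          (isAlgebraic_adjoin_ring_iff_field _ x).2 halgx
        refine isAlgebraic_ring_adjoin_mono ?_ h3
        intro z hz
        simp only [Finset.coe_inter, Set.mem_inter_iff, Finset.mem_coe] at hz
        refine ⟨by exact_mod_cast hz.1, ?_⟩
        simp only [Set.mem_singleton_iff]
        rintro rfl
        exact hxt hz.2
      -- minimal spanning subset t₀ of t containing u ∩ t
      set P : Finset E → Prop :=
        fun t₀ => (u ∩ t) ⊆ t₀ ∧ IsAlgebraic (adjoin K (t₀ : Set E)) x with hP
      have hPdec : DecidablePred P := Classical.decPred P
      have hne : t ∈ (t.powerset.filter P) := by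
        rw [Finset.mem_filter, Finset.mem_powerset]
        exact ⟨le_refl t, Finset.inter_subset_right, halg x hxu⟩
      obtain ⟨t₀, ht₀mem, ht₀min⟩ :=
        Finset.exists_min_image (t.powerset.filter P) Finset.card ⟨t, hne⟩
      rw [Finset.mem_filter, Finset.mem_powerset] at ht₀mem
      obtain ⟨ht₀t, hut_t₀, ht₀alg⟩ := ht₀mem
      -- pick y ∈ t₀ \ (u ∩ t)
      have hnsub : ¬ t₀ ⊆ (u ∩ t) := by
        intro hsub'
        exact hx_tr_ut (isAlgebraic_of_le
          (by exact_mod_cast IntermediateField.adjoin.mono K _ _ (Finset.coe_subset.2 hsub'))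
          ht₀alg)
      obtain ⟨y, hyt₀, hy_ut⟩ := Finset.not_subset.1 hnsub
      have hyt : y ∈ t := ht₀t hyt₀
      have hyu : y ∉ u := fun hyu => hy_ut (Finset.mem_inter.2 ⟨hyu, hyt⟩)
      -- minimality: x is transcendental over K(t₀ \ {y})
      have hx_tr : Transcendental (adjoin K ((t₀.erase y : Finset E) : Set E)) x := by
        intro halg'
        have hmem' : t₀.erase y ∈ t.powerset.filter P := by
          rw [Finset.mem_filter, Finset.mem_powerset]
          refine ⟨(Finset.erase_subset y t₀).trans ht₀t, ?_, halg'⟩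
          intro z hz
          exact Finset.mem_erase.2 ⟨fun h => hy_ut (h ▸ hz), hut_t₀ hz⟩
        have hlec := ht₀min _ hmem'
        rw [Finset.card_erase_of_mem hyt₀] at hlec
        have hpos := Finset.card_pos.2 ⟨y, hyt₀⟩
        omega
      -- exchange
      have hxalg : IsAlgebraic (adjoin K (insert y ((t₀.erase y : Finset E) : Set E))) x := by
        have hins : insert y ((t₀.erase y : Finset E) : Set E) = (t₀ : Set E) := by
          rw [← Finset.coe_insert, Finset.insert_erase hyt₀]
        rw [hins]; exact ht₀alg
      have hy_alg0 : IsAlgebraic (adjoin K (insert x ((t₀.erase y : Finset E) : Set E))) y :=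
        exchange_step hxalg hx_tr
      set t' : Finset E := insert x (t.erase y) with ht'
      have hy_alg : IsAlgebraic (adjoin K (t' : Set E)) y := by
        refine isAlgebraic_adjoin_mono_s11 ?_ hy_alg0
        rw [ht', Finset.coe_insert]
        apply Set.insert_subset_insert
        exact Finset.coe_subset.2 (Finset.erase_subset_erase y ht₀t)
      have halg' : ∀ z ∈ u, IsAlgebraic (adjoin K (t' : Set E)) z := by
        intro z hz
        have hsub3 : (t : Set E) ⊆ insert y (t' : Set E) := by
          intro w hw
          rcases eq_or_ne w y with rfl | hne
          · exact Set.mem_insert _ _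
          · refine Set.mem_insert_of_mem _ ?_
            rw [ht', Finset.coe_insert]
            refine Set.mem_insert_of_mem _ ?_
            exact_mod_cast Finset.mem_erase.2 ⟨hne, by exact_mod_cast hw⟩
        exact isAlgebraic_insert_trans hy_alg
          (isAlgebraic_adjoin_mono_s11 hsub3 (halg z hz))
      have hxt' : x ∉ t.erase y := fun h => hxt (Finset.mem_of_mem_erase h)
      have hcard : t'.card = t.card := by
        rw [ht', Finset.card_insert_of_notMem hxt', Finset.card_erase_of_mem hyt]
        have := Finset.card_pos.2 ⟨y, hyt⟩
        omega
      have hmeas : (u \ t').card ≤ N := by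
        have hsub2 : u \ t' ⊆ (u \ t).erase x := by
          intro z hz
          rw [Finset.mem_sdiff] at hz
          obtain ⟨hzu, hzt'⟩ := hz
          have hzx : z ≠ x := by rintro rfl; exact hzt' (Finset.mem_insert_self _ _)
          have hzt2 : z ∉ t := by
            intro hzt3
            have hzy : z ≠ y := by rintro rfl; exact hyu hzu
            exact hzt' (Finset.mem_insert_of_mem (Finset.mem_erase.2 ⟨hzy, hzt3⟩))
          exact Finset.mem_erase.2 ⟨hzx, Finset.mem_sdiff.2 ⟨hzu, hzt2⟩⟩
        have h4 := Finset.card_le_card hsub2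
        rw [Finset.card_erase_of_mem (Finset.mem_sdiff.2 ⟨hxu, hxt⟩)] at h4
        have := Finset.card_pos.2 ⟨x, Finset.mem_sdiff.2 ⟨hxu, hxt⟩⟩
        omega
      calc u.card ≤ t'.card := ih t' u hmeas hind halg'
        _ = t.card := hcard

theorem mk_le_of_algIndep (t : Finset E) (u : Set E)
    (hu : AlgebraicIndependent K ((↑) : u → E))
    (halg : ∀ x ∈ u, IsAlgebraic (adjoin K (t : Set E)) x) :
    Cardinal.mk u ≤ (t.card : Cardinal) := by
  classical
  have hfin : ∀ v : Finset E, ↑v ⊆ u → v.card ≤ t.card := fun v hv =>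
    card_le_of_algIndep_finset ((v \ t).card) t v le_rfl (hu.mono hv)
      (fun x hx => halg x (hv hx))
  have hufin : u.Finite := by
    by_contra hinf
    have hinf' : u.Infinite := fun h => hinf h
    obtain ⟨v, hv, hvcard⟩ := hinf'.exists_subset_card_eq (t.card + 1)
    have := hfin v hv
    omega
  have hcoe : (hufin.toFinset : Set E) = u := hufin.coe_toFinset
  calc Cardinal.mk u = Cardinal.mk (hufin.toFinset : Set E) := by rw [hcoe]
    _ = (hufin.toFinset.card : Cardinal) := Cardinal.mk_coe_finset
    _ ≤ (t.card : Cardinal) := by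
        exact_mod_cast Nat.cast_le.2 (hfin hufin.toFinset (by rw [hcoe]))

end Steinitz

section Trdeg

variable {K E : Type} [Field K] [Field E] [Algebra K E]

theorem trdeg_adjoin_eq_s11 (S : Set E) (T : Finset E) (hTS : ↑T ⊆ S)
    (hind : AlgebraicIndependent K ((↑) : ↥(T : Set E) → E))
    (halg : ∀ a ∈ S, IsAlgebraic (adjoin K (T : Set E)) a) :
    trdeg K (adjoin K S) = (T.card : Cardinal) := by
  classical
  set M := adjoin K S with hM
  haveI : Nonempty {s : Set M // AlgebraicIndependent K ((↑) : s → M)} :=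
    ⟨⟨∅, algebraicIndependent_empty⟩⟩
  apply le_antisymm
  · refine ciSup_le ?_
    rintro ⟨s, hs⟩
    have hmap : AlgebraicIndependent K (fun x : s => (M.val (x : M))) :=
      hs.map' (f := M.val) Subtype.val_injective
    have himg : AlgebraicIndependent K ((↑) : ↥(Subtype.val '' s : Set E) → E) :=
      AlgebraicIndependent.image hmap
    have halg2 : ∀ x ∈ (Subtype.val '' s : Set E), IsAlgebraic (adjoin K (T : Set E)) x := by
      rintro x ⟨z, hzs, rfl⟩
      exact isAlgebraic_adjoin_of_forall halg z.2
    have hle := mk_le_of_algIndep T _ himg halg2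
    calc Cardinal.mk s = Cardinal.mk (Subtype.val '' s : Set E) :=
          (Cardinal.mk_image_eq Subtype.val_injective).symm
      _ ≤ (T.card : Cardinal) := hle
  · set g : ↥(T : Set E) → M := fun x => ⟨x.1, subset_adjoin K S (hTS x.2)⟩ with hg
    have hcomp : (⇑M.val ∘ g) = ((↑) : ↥(T : Set E) → E) := rfl
    have hgind : AlgebraicIndependent K g := by
      apply AlgebraicIndependent.of_comp M.val
      rw [hcomp]
      exact hind
    have hginj : Function.Injective g := by
      intro a b h
      exact Subtype.ext (congrArg (Subtype.val : M → E) h)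
    have hrange : AlgebraicIndependent K ((↑) : ↥(Set.range g) → M) :=
      hgind.to_subtype_range
    have hle : Cardinal.mk (Set.range g) ≤ trdeg K M :=
      le_ciSup (Cardinal.bddAbove_range _)
        (⟨Set.range g, hrange⟩ : {s : Set M // AlgebraicIndependent K ((↑) : s → M)})
    calc (T.card : Cardinal) = Cardinal.mk ↥(T : Set E) := by
          rw [← Cardinal.mk_coe_finset]; rfl
      _ = Cardinal.mk (Set.range g) := (Cardinal.mk_range_eq g hginj).symm
      _ ≤ trdeg K M := hle

end Trdeg

section Application

open MvPolynomial

variable {K : Type} [Field K]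

/-- The coordinate functions in the fraction field are algebraically independent. -/
theorem xfam_indep (σ : Type) :
    AlgebraicIndependent K (fun v : σ =>
      algebraMap (MvPolynomial σ K) (FractionRing (MvPolynomial σ K)) (X v)) := by
  have h := (MvPolynomial.algebraicIndependent_X σ K).map'
    (f := IsScalarTower.toAlgHom K (MvPolynomial σ K) (FractionRing (MvPolynomial σ K)))
    (IsFractionRing.injective _ _)
  exact h

/-- `x_a · x_{w₀} - x_b · x_c` is transcendental over the subfield generated by all
variables other than `x_{w₀}`. -/
theorem special_transcendental (σ : Type) (w₀ a b c : σ)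
    (ha : a ≠ w₀) (hb : b ≠ w₀) (hc : c ≠ w₀) :
    Transcendental (adjoin K ((fun v : σ =>
        algebraMap (MvPolynomial σ K) (FractionRing (MvPolynomial σ K)) (X v)) ''
        {v : σ | v ≠ w₀}))
      (algebraMap (MvPolynomial σ K) (FractionRing (MvPolynomial σ K)) (X a) *
        algebraMap (MvPolynomial σ K) (FractionRing (MvPolynomial σ K)) (X w₀) -
       algebraMap (MvPolynomial σ K) (FractionRing (MvPolynomial σ K)) (X b) *
        algebraMap (MvPolynomial σ K) (FractionRing (MvPolynomial σ K)) (X c)) := by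
  set F := FractionRing (MvPolynomial σ K)
  set xf : σ → F := fun v => algebraMap (MvPolynomial σ K) F (X v) with hxf
  set W : Set σ := {v : σ | v ≠ w₀} with hW
  set M₁ := adjoin K (xf '' W) with hM₁
  set f : F := xf a * xf w₀ - xf b * xf c with hf
  have hXind : AlgebraicIndependent K xf := xfam_indep σ
  have hxinj : Function.Injective xf := hXind.injective
  -- x_{w₀} is transcendental over M₁
  have hyl_tr : Transcendental M₁ (xf w₀) := by
    have hset : insert (xf w₀) (xf '' W) = Set.range xf := by
      ext z
      constructor
      · rintro (rfl | ⟨v, _, rfl⟩) <;> exact ⟨_, rfl⟩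
      · rintro ⟨v, rfl⟩
        rcases eq_or_ne v w₀ with rfl | hv
        · exact Set.mem_insert _ _
        · exact Set.mem_insert_of_mem _ ⟨v, hv, rfl⟩
    have hnotmem : xf w₀ ∉ xf '' W := by
      rintro ⟨v, hv, hveq⟩
      exact hv (hxinj hveq)
    have hind : AlgebraicIndependent K ((↑) : ↥(insert (xf w₀) (xf '' W)) → F) := by
      rw [hset]
      exact hXind.to_subtype_range
    have := ((algebraicIndependent_insert_iff hnotmem).1 hind).2
    exact (transcendental_adjoin_ring_iff_field _ _).1 this
  -- conclude
  intro hfalg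
  haveI : Algebra.IsAlgebraic M₁ (adjoin M₁ ({f} : Set F)) :=
    isAlgebraic_adjoin_simple (isAlgebraic_iff_isIntegral.1 hfalg)
  have hmemM₁ : ∀ v : σ, v ≠ w₀ → xf v ∈ M₁ := fun v hv =>
    subset_adjoin K _ ⟨v, hv, rfl⟩
  have hbase : ∀ z : F, z ∈ M₁ → z ∈ (adjoin M₁ ({f} : Set F)) := by
    intro z hz
    exact (adjoin M₁ ({f} : Set F)).algebraMap_mem (⟨z, hz⟩ : M₁)
  have hfa : xf a ≠ 0 := by
    intro h
    have h' : algebraMap (MvPolynomial σ K) F (X a) = algebraMap (MvPolynomial σ K) F 0 := by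
      rw [map_zero]; exact h
    exact MvPolynomial.X_ne_zero a (IsFractionRing.injective (MvPolynomial σ K) F h')
  have hyl_mem : xf w₀ ∈ (adjoin M₁ ({f} : Set F)) := by
    have heq : xf w₀ = (f + xf b * xf c) / (xf a) := by
      rw [hf, eq_div_iff hfa]
      ring
    rw [heq]
    exact div_mem
      (add_mem (mem_adjoin_simple_self M₁ f)
        (mul_mem (hbase _ (hmemM₁ b hb)) (hbase _ (hmemM₁ c hc))))
      (hbase _ (hmemM₁ a ha))
  exact hyl_tr (isAlgebraic_of_mem_isAlgebraic _ hyl_mem)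

/-- Transfer algebraicity over adjoined fields along an injective `K`-algebra hom. -/
theorem isAlgebraic_image_adjoin {E E' : Type} [Field E] [Field E'] [Algebra K E] [Algebra K E']
    (φ : E →ₐ[K] E') (s : Set E) (a : E)
    (h : IsAlgebraic (adjoin K s) a) : IsAlgebraic (adjoin K (⇑φ '' s)) (φ a) := by
  have hmem : ∀ x : adjoin K s, φ x ∈ adjoin K (⇑φ '' s) := by
    intro x
    have : φ x ∈ (adjoin K s).map φ := ⟨x, x.2, rfl⟩
    rwa [adjoin_map] at this
  set ι : (adjoin K s) →+* (adjoin K (⇑φ '' s)) :=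
    ((φ.comp (IntermediateField.val (adjoin K s))).toRingHom).codRestrict
      (adjoin K (⇑φ '' s)).toSubring hmem with hι
  have hιinj : Function.Injective ι := by
    intro x y hxy
    have := congrArg Subtype.val hxy
    exact Subtype.ext (φ.injective this)
  exact isAlgebraic_transfer_s11 ι hιinj (φ : E →+* E') (by ext x; rfl) h

end Application

section Application2

open IntermediateField MvPolynomial

variable {K : Type} [Field K]

/-- Every finite set contains a maximal algebraically independent subset whose field-adjoin
captures all of it algebraically. -/
theorem exists_max_indep {E : Type} [Field E] [Algebra K E] (S : Set E) (hS : S.Finite) :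
    ∃ T : Finset E, ↑T ⊆ S ∧ AlgebraicIndependent K ((↑) : ↥(T : Set E) → E) ∧
      ∀ a ∈ S, IsAlgebraic (adjoin K (T : Set E)) a := by
  classical
  obtain ⟨u, hu_sub, hmax⟩ := exists_maximal_algebraicIndependent (∅ : Set E) S
    (Set.empty_subset S) (algebraicIndependent_empty (K := K) (A := E))
  obtain ⟨⟨huind, huS⟩, hmax2⟩ := hmax
  have hufin : u.Finite := hS.subset huS
  have hcoe : (hufin.toFinset : Set E) = u := hufin.coe_toFinset
  refine ⟨hufin.toFinset, by rw [hcoe]; exact huS, by rw [hcoe]; exact huind, ?_⟩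
  intro a haS
  by_cases hau : a ∈ u
  · exact isAlgebraic_of_mem' _ (subset_adjoin K _ (by rwa [hcoe]))
  · by_contra htr
    have htr' : Transcendental (Algebra.adjoin K u) a := by
      intro halg
      apply htr
      have := (isAlgebraic_adjoin_ring_iff_field u a).1 halg
      exact isAlgebraic_of_le (by rw [hcoe]) this
    have hins : AlgebraicIndependent K ((↑) : ↥(insert a u) → E) :=
      (algebraicIndependent_insert_iff hau).2 ⟨huind, htr'⟩
    have hle := hmax2 ⟨hins, Set.insert_subset haS huS⟩ (Set.subset_insert a u)
    exact hau (hle (Set.mem_insert a u))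

/-- Lift of a variable renaming to an embedding of fraction fields. -/
noncomputable def liftRename (σ τ : Type) (e : σ → τ) (he : Function.Injective e) :
    FractionRing (MvPolynomial σ K) →ₐ[K] FractionRing (MvPolynomial τ K) :=
  IsFractionRing.liftAlgHom
    (g := (IsScalarTower.toAlgHom K (MvPolynomial τ K)
        (FractionRing (MvPolynomial τ K))).comp (MvPolynomial.rename e))
    (by
      rw [AlgHom.coe_comp]
      exact (IsFractionRing.injective _ _).comp (MvPolynomial.rename_injective e he))

theorem liftRename_algebraMap (σ τ : Type) (e : σ → τ) (he : Function.Injective e)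
    (p : MvPolynomial σ K) :
    liftRename (K := K) σ τ e he (algebraMap (MvPolynomial σ K) (FractionRing (MvPolynomial σ K)) p)
      = algebraMap (MvPolynomial τ K) (FractionRing (MvPolynomial τ K))
          (MvPolynomial.rename e p) := by
  have := IsFractionRing.lift_algebraMap
    (K := FractionRing (MvPolynomial σ K)) (L := FractionRing (MvPolynomial τ K))
    (g := ((IsScalarTower.toAlgHom K (MvPolynomial τ K)
        (FractionRing (MvPolynomial τ K))).comp (MvPolynomial.rename e) :
          MvPolynomial σ K →ₐ[K] FractionRing (MvPolynomial τ K)).toRingHom)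
    (hg := by
      rw [AlgHom.toRingHom_eq_coe]
      show Function.Injective
        ((IsScalarTower.toAlgHom K (MvPolynomial τ K)
          (FractionRing (MvPolynomial τ K))).comp (MvPolynomial.rename e))
      rw [AlgHom.coe_comp]
      exact (IsFractionRing.injective _ _).comp (MvPolynomial.rename_injective e he)) p
  exact this

end Application2

set_option maxHeartbeats 2000000 in
set_option synthInstance.maxHeartbeats 400000 in
/-- Adding a leaf increases the analytic spread of the binomial edge ideal by exactly one:
if `G'` is obtained from a nonempty graph `G` on vertices `{0,…,n−1}` by adding a new vertex
`n` and the single new edge `{i, n}`, then `ℓ(J_{G'}) = ℓ(J_G) + 1`. -/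
theorem spread_add_leaf
    (K : Type) [Field K] [Infinite K] (n : ℕ) (hn : 1 ≤ n)
    (G : SimpleGraph (Fin n)) (i : Fin n)
    (G' : SimpleGraph (Fin (n + 1)))
    (hG' : G' = (G.map Fin.castSucc) ⊔
      SimpleGraph.fromEdgeSet {s(Fin.castSucc i, Fin.last n)}) :
    spread K G' = spread K G + 1 := by
  classical
  set σn := (Fin n ⊕ Fin n) with hσn
  set σm := (Fin (n+1) ⊕ Fin (n+1)) with hσm
  set Fn := FractionRing (MvPolynomial σn K) with hFn
  set Fm := FractionRing (MvPolynomial σm K) with hFm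
  set e : σn → σm := Sum.map Fin.castSucc Fin.castSucc with he_def
  have he : Function.Injective e :=
    Function.Injective.sumMap (Fin.castSucc_injective n) (Fin.castSucc_injective n)
  set ψ : Fn →ₐ[K] Fm := liftRename σn σm e he with hψ
  have hψinj : Function.Injective ψ := ψ.toRingHom.injective
  set S : Set Fn := edgeBinoms K G with hS
  set S' : Set Fm := edgeBinoms K G' with hS'
  -- S is finite
  have hSfin : S.Finite := by
    have hsub : S ⊆ (fun p : Fin n × Fin n =>
        algebraMap (MvPolynomial σn K) Fn
          (X (Sum.inl p.1) * X (Sum.inr p.2) - X (Sum.inl p.2) * X (Sum.inr p.1))) ''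
          Set.univ := by
      rintro z ⟨a, b, _, rfl⟩
      exact ⟨(a, b), trivial, rfl⟩
    exact (Set.finite_univ.image _).subset hsub
  obtain ⟨T, hTS, hTind, hTalg⟩ := exists_max_indep (K := K) S hSfin
  set ci := Fin.castSucc i with hci
  set l := Fin.last n with hl
  have hciln : ci ≠ l := (Fin.castSucc_lt_last i).ne
  set xm : σm → Fm := fun v => algebraMap (MvPolynomial σm K) Fm (X v) with hxm
  set fplus : Fm := xm (Sum.inl ci) * xm (Sum.inr l) - xm (Sum.inl l) * xm (Sum.inr ci)
    with hfplus
  have hfeq : fplus = algebraMap (MvPolynomial σm K) Fm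
      (X (Sum.inl ci) * X (Sum.inr l) - X (Sum.inl l) * X (Sum.inr ci)) := by
    rw [hfplus, hxm]
    simp [map_sub, map_mul]
  -- ψ sends binomials to binomials
  have hψbinom : ∀ a b : Fin n,
      ψ (algebraMap (MvPolynomial σn K) Fn
        (X (Sum.inl a) * X (Sum.inr b) - X (Sum.inl b) * X (Sum.inr a)))
      = algebraMap (MvPolynomial σm K) Fm
        (X (Sum.inl (Fin.castSucc a)) * X (Sum.inr (Fin.castSucc b)) -
         X (Sum.inl (Fin.castSucc b)) * X (Sum.inr (Fin.castSucc a))) := by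
    intro a b
    rw [hψ, liftRename_algebraMap]
    congr 1
    simp [he_def, map_sub, map_mul, MvPolynomial.rename_X]
  -- the field of the old variables
  set W : Set σm := {v : σm | v ≠ Sum.inr l} with hW
  set M₁ := IntermediateField.adjoin K (xm '' W) with hM₁
  have hfplus_tr : Transcendental M₁ fplus := by
    have := special_transcendental (K := K) σm (Sum.inr l) (Sum.inl ci) (Sum.inl l)
      (Sum.inr ci) (by simp) (by simp) (fun hcon => hciln (Sum.inr.inj hcon))
    exact this
  -- the image of ψ on polynomials lands in M₁
  have hψmem : ∀ p : MvPolynomial σn K, ψ (algebraMap (MvPolynomial σn K) Fn p) ∈ M₁ := by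
    intro p
    rw [hψ, liftRename_algebraMap]
    have h1 : MvPolynomial.rename e p ∈ MvPolynomial.supported K (Set.range e) := by
      rw [MvPolynomial.mem_supported]
      intro v hv
      have hmem := MvPolynomial.vars_rename e p (by exact_mod_cast hv)
      obtain ⟨w, _, rfl⟩ := Finset.mem_image.1 hmem
      exact ⟨w, rfl⟩
    rw [MvPolynomial.supported_eq_adjoin_X] at h1
    have h2 : algebraMap (MvPolynomial σm K) Fm (MvPolynomial.rename e p) ∈
        (Algebra.adjoin K (MvPolynomial.X '' Set.range e)).map
          (IsScalarTower.toAlgHom K (MvPolynomial σm K) Fm) :=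
      ⟨MvPolynomial.rename e p, h1, rfl⟩
    rw [AlgHom.map_adjoin] at h2
    have h3 : (⇑(IsScalarTower.toAlgHom K (MvPolynomial σm K) Fm) ''
        (MvPolynomial.X '' Set.range e)) ⊆ xm '' W := by
      rintro z ⟨q, ⟨v, ⟨w, rfl⟩, rfl⟩, rfl⟩
      refine ⟨e w, ?_, rfl⟩
      rcases w with a | a
      · simp [he_def, hW]
      · simp only [he_def, hW, Sum.map_inr, Set.mem_setOf_eq]
        intro hcon
        exact (Fin.castSucc_lt_last a).ne (by injection hcon)
    have h4 := Algebra.adjoin_mono h3 h2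
    exact IntermediateField.algebra_adjoin_le_adjoin K _ h4
  have hψT_M₁ : (⇑ψ '' (T : Set Fn)) ⊆ (M₁ : Set Fm) := by
    rintro z ⟨t, ht, rfl⟩
    obtain ⟨a, b, _, rfl⟩ := hTS ht
    exact hψmem _
  -- fplus is in S'
  have hfplusS' : fplus ∈ S' := by
    refine ⟨ci, l, ?_, hfeq⟩
    rw [hG']
    exact Or.inr ((SimpleGraph.fromEdgeSet_adj _).2 ⟨rfl, hciln⟩)
  set T' : Finset Fm := insert fplus (T.image ψ) with hT'
  have hT'coe : (T' : Set Fm) = insert fplus (⇑ψ '' (T : Set Fn)) := by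
    rw [hT']
    simp
  have hfplus_not : fplus ∉ ⇑ψ '' (T : Set Fn) := fun hmem =>
    hfplus_tr (isAlgebraic_of_mem' M₁ (hψT_M₁ hmem))
  -- independence of T'
  have hψTind : AlgebraicIndependent K ((↑) : ↥(⇑ψ '' (T : Set Fn)) → Fm) :=
    AlgebraicIndependent.image (hTind.map' hψinj)
  have hfplus_tr_ring : Transcendental (Algebra.adjoin K (⇑ψ '' (T : Set Fn))) fplus := by
    intro halg
    apply hfplus_tr
    have h1 := (isAlgebraic_adjoin_ring_iff_field _ _).1 halg
    refine isAlgebraic_of_le ?_ h1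
    have hle : IntermediateField.adjoin K (⇑ψ '' (T : Set Fn)) ≤ M₁ :=
      IntermediateField.adjoin_le_iff.2 hψT_M₁
    exact hle
  have hT'ind : AlgebraicIndependent K ((↑) : ↥(T' : Set Fm) → Fm) := by
    rw [hT'coe]
    exact (algebraicIndependent_insert_iff hfplus_not).2 ⟨hψTind, hfplus_tr_ring⟩
  -- T' is inside S'
  have hT'S' : ↑T' ⊆ S' := by
    rw [hT'coe]
    refine Set.insert_subset hfplusS' ?_
    rintro z ⟨t, ht, rfl⟩
    obtain ⟨a, b, hab, rfl⟩ := hTS ht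
    refine ⟨Fin.castSucc a, Fin.castSucc b, ?_, hψbinom a b⟩
    rw [hG']
    exact Or.inl ⟨(Fin.castSucc_injective n).ne hab.ne, a, b, hab, rfl, rfl⟩
  -- all of S' is algebraic over K(T')
  have hT'alg : ∀ a ∈ S', IsAlgebraic (IntermediateField.adjoin K (T' : Set Fm)) a := by
    rintro z ⟨a₁, b₁, hadj, rfl⟩
    rw [hG'] at hadj
    rcases hadj with hmapadj | hedge
    · obtain ⟨_, a₀, b₀, h₀, ha₀, hb₀⟩ := hmapadj
      have ha₀' : Fin.castSucc a₀ = a₁ := ha₀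
      have hb₀' : Fin.castSucc b₀ = b₁ := hb₀
      subst ha₀' hb₀'
      have h1 : IsAlgebraic (IntermediateField.adjoin K (T : Set Fn))
          (algebraMap (MvPolynomial σn K) Fn
            (X (Sum.inl a₀) * X (Sum.inr b₀) - X (Sum.inl b₀) * X (Sum.inr a₀))) :=
        hTalg _ ⟨a₀, b₀, h₀, rfl⟩
      have h2 := isAlgebraic_image_adjoin ψ _ _ h1
      rw [hψbinom a₀ b₀] at h2
      refine isAlgebraic_adjoin_mono_s11 ?_ h2
      rw [hT'coe]
      exact Set.subset_insert _ _
    · rw [SimpleGraph.fromEdgeSet_adj] at hedge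
      obtain ⟨hmem, hne⟩ := hedge
      rw [Set.mem_singleton_iff, Sym2.eq_iff] at hmem
      have hfmem : fplus ∈ IntermediateField.adjoin K (T' : Set Fm) :=
        IntermediateField.subset_adjoin _ _ (by
          rw [hT'coe]; exact Set.mem_insert _ _)
      rcases hmem with ⟨rfl, rfl⟩ | ⟨rfl, rfl⟩
      · rw [← hfeq]
        exact isAlgebraic_of_mem' _ hfmem
      · have hzneg : algebraMap (MvPolynomial σm K) Fm
            (X (Sum.inl (Fin.last n)) * X (Sum.inr ci) -
             X (Sum.inl ci) * X (Sum.inr (Fin.last n))) = -fplus := by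
          rw [hfeq, ← map_neg]
          congr 1
          ring
        rw [hzneg]
        exact isAlgebraic_of_mem' _ (neg_mem hfmem)
  -- compute both spreads
  have hspreadG : spread K G = (T.card : Cardinal) :=
    trdeg_adjoin_eq_s11 S T hTS hTind hTalg
  have hspreadG' : spread K G' = (T'.card : Cardinal) :=
    trdeg_adjoin_eq_s11 S' T' hT'S' hT'ind hT'alg
  have hfplus_notimg : fplus ∉ T.image ψ := by
    intro h
    apply hfplus_not
    obtain ⟨t, ht, heq⟩ := Finset.mem_image.1 h
    exact ⟨t, ht, heq⟩
  have hcard : T'.card = T.card + 1 := by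
    rw [hT', Finset.card_insert_of_notMem hfplus_notimg,
      Finset.card_image_of_injective _ hψinj]
  rw [hspreadG, hspreadG', hcard]
  push_cast
  ring
end

section
/- If T is a tree (a connected acyclic finite simple graph), then ℓ(J_T) = |E(T)|, i.e., the analytic spread of the binomial edge ideal of a tree equals its number of edges. Equivalently, the binomials {x_i y_j − x_j y_i : {i,j} ∈ E(T)} are algebraically independent over K. -/
open MvPolynomial

section Aux

lemma totalDeg_mem_span {K : Type} [Field K] {ι : Type} [Fintype ι] (t : ℕ)
    (q : MvPolynomial ι K) (hq : q.totalDegree ≤ t) :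
    q ∈ Submodule.span K (Set.range fun (φ : ι → Fin (t+1)) =>
      (monomial (Finsupp.equivFunOnFinite.symm fun i => ((φ i : ℕ))) (1:K) : MvPolynomial ι K)) := by
  rw [← q.support_sum_monomial_coeff]
  refine Submodule.sum_mem _ fun s hs => ?_
  have hle : ∀ i, s i ≤ t := by
    intro i
    refine le_trans ?_ (le_trans (le_totalDegree hs) hq)
    by_cases h : i ∈ s.support
    · exact Finset.single_le_sum (f := fun i => s i) (fun _ _ => Nat.zero_le _) h
    · simp [Finsupp.notMem_support_iff.mp h]
  have h1 : (monomial s (coeff s q) : MvPolynomial ι K)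
      = coeff s q • (monomial s (1:K)) := by
    rw [smul_monomial, smul_eq_mul, mul_one]
  rw [h1]
  refine Submodule.smul_mem _ _ (Submodule.subset_span ?_)
  refine ⟨fun i => ⟨s i, Nat.lt_succ_of_le (hle i)⟩, ?_⟩
  congr 1
  ext i
  simp

lemma not_algIndep_of_card (K : Type) [Field K] (ι : Type) [Fintype ι] (m : ℕ)
    (hcard : Fintype.card ι = m)
    (L : Type) [Field L] [Algebra K L] [Algebra (MvPolynomial ι K) L]
    [IsScalarTower K (MvPolynomial ι K) L] [IsFractionRing (MvPolynomial ι K) L]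
    (f : Fin (m + 1) → L) :
    ¬ AlgebraicIndependent K f := by
  intro hf
  classical
  have hsur : ∀ i, ∃ (a : MvPolynomial ι K) (b : MvPolynomial ι K), b ≠ 0 ∧ f i * algebraMap (MvPolynomial ι K) L b = algebraMap (MvPolynomial ι K) L a := by
    intro i
    obtain ⟨⟨a, b⟩, h⟩ := IsLocalization.surj (nonZeroDivisors (MvPolynomial ι K)) (f i)
    exact ⟨a, b, nonZeroDivisors.ne_zero b.2, h⟩
  choose a b hb hfb using hsur
  set D : MvPolynomial ι K := ∏ i, b i with hD
  have hDne : D ≠ 0 := Finset.prod_ne_zero_iff.mpr fun i _ => hb i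
  set g : Fin (m+1) → MvPolynomial ι K := fun i => a i * ∏ j ∈ Finset.univ.erase i, b j with hg
  have key : ∀ i, f i * algebraMap (MvPolynomial ι K) L D = algebraMap (MvPolynomial ι K) L (g i) := by
    intro i
    have h2 : D = b i * ∏ j ∈ Finset.univ.erase i, b j :=
      (Finset.mul_prod_erase _ _ (Finset.mem_univ i)).symm
    rw [h2, map_mul, map_mul, ← mul_assoc, hfb i]
  set d : ℕ := max D.totalDegree (Finset.univ.sup fun i => (g i).totalDegree) with hd
  set c : ℕ := d * (m+1) + 1 with hc
  set N : ℕ := c ^ m with hN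
  set M : ℕ := (m+1) * N with hM
  set t : ℕ := d * M with ht
  have sumle : ∀ α : Fin (m+1) → Fin (N+1), ∑ i, (α i : ℕ) ≤ M := by
    intro α
    calc ∑ i, (α i : ℕ) ≤ ∑ _i : Fin (m+1), N :=
          Finset.sum_le_sum fun i _ => Nat.lt_succ_iff.mp (α i).2
      _ = (m+1) * N := by simp [Finset.sum_const, mul_comm]
  set p : (Fin (m+1) → Fin (N+1)) → MvPolynomial ι K :=
    fun α => (∏ i, (g i) ^ (α i : ℕ)) * D ^ (M - ∑ i, (α i : ℕ)) with hp
  set e : (Fin (m+1) → Fin (N+1)) → (Fin (m+1) →₀ ℕ) :=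
    fun α => Finsupp.equivFunOnFinite.symm fun i => (α i : ℕ) with he
  have e_inj : Function.Injective e := by
    intro α β hαβ
    funext i
    have h3 := congrFun (congrArg (fun (s : Fin (m+1) →₀ ℕ) => (s : Fin (m+1) → ℕ)) hαβ) i
    simp [he] at h3
    exact Fin.ext h3
  have aeval_mon : ∀ α, aeval f (monomial (e α) (1:K)) = ∏ i, f i ^ (α i : ℕ) := by
    intro α
    rw [aeval_monomial, map_one, one_mul, Finsupp.prod_fintype]
    · simp [he]
    · intro i; exact pow_zero _
  have himg : ∀ α, algebraMap (MvPolynomial ι K) L (p α)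
      = aeval f (monomial (e α) (1:K)) * (algebraMap (MvPolynomial ι K) L D) ^ M := by
    intro α
    have hMsplit : (algebraMap (MvPolynomial ι K) L D) ^ M
        = (algebraMap (MvPolynomial ι K) L D) ^ (∑ i, (α i : ℕ)) * (algebraMap (MvPolynomial ι K) L D) ^ (M - ∑ i, (α i : ℕ)) := by
      rw [← pow_add, Nat.add_sub_cancel' (sumle α)]
    have h4 : (∏ i, f i ^ (α i : ℕ)) * (algebraMap (MvPolynomial ι K) L D) ^ (∑ i, (α i : ℕ))
        = ∏ i, (algebraMap (MvPolynomial ι K) L (g i)) ^ (α i : ℕ) := by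
      rw [← Finset.prod_pow_eq_pow_sum, ← Finset.prod_mul_distrib]
      exact Finset.prod_congr rfl fun i _ => by rw [← mul_pow, key i]
    rw [aeval_mon α, hMsplit, ← mul_assoc, h4]
    simp only [hp, map_mul, map_prod, map_pow]
  have li0 : LinearIndependent K
      fun s : Fin (m+1) →₀ ℕ => (monomial s (1:K) : MvPolynomial (Fin (m+1)) K) := by
    have h5 := (MvPolynomial.basisMonomials (Fin (m+1)) K).linearIndependent
    rwa [coe_basisMonomials] at h5
  have li1 : LinearIndependent K fun α => aeval f (monomial (e α) (1:K)) := by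
    exact (li0.comp e e_inj).map' (aeval f).toLinearMap
      (LinearMap.ker_eq_bot.mpr (by exact hf))
  have hu : (algebraMap (MvPolynomial ι K) L D) ^ M ≠ 0 :=
    pow_ne_zero _ (fun h => hDne ((map_eq_zero_iff _ (IsFractionRing.injective (MvPolynomial ι K) L)).mp h))
  have li2 : LinearIndependent K fun α => algebraMap (MvPolynomial ι K) L (p α) := by
    have h6 := li1.map' (LinearMap.mulRight K ((algebraMap (MvPolynomial ι K) L D) ^ M))
      (LinearMap.ker_eq_bot.mpr (fun x y hxy => mul_right_cancel₀ hu hxy))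
    have heq : (⇑(LinearMap.mulRight K ((algebraMap (MvPolynomial ι K) L D) ^ M))
        ∘ fun α => aeval f (monomial (e α) (1:K)))
        = fun α => algebraMap (MvPolynomial ι K) L (p α) := by
      funext α
      simp only [Function.comp_apply, LinearMap.mulRight_apply]
      exact (himg α).symm
    rwa [heq] at h6
  have li3 : LinearIndependent K p :=
    LinearIndependent.of_comp (IsScalarTower.toAlgHom K (MvPolynomial ι K) L).toLinearMap (by exact li2)
  set w : (ι → Fin (t+1)) → MvPolynomial ι K := fun φ =>
    (monomial (Finsupp.equivFunOnFinite.symm fun i => ((φ i : ℕ))) (1:K) : MvPolynomial ι K) with hw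
  set W : Submodule K (MvPolynomial ι K) := Submodule.span K (Set.range w) with hW
  have hdg : ∀ i, (g i).totalDegree ≤ d := by
    intro i
    exact le_trans (Finset.le_sup (f := fun i => (g i).totalDegree) (Finset.mem_univ i))
      (le_max_right _ _)
  have hdD : D.totalDegree ≤ d := le_max_left _ _
  have hmem : ∀ α, p α ∈ W := by
    intro α
    refine totalDeg_mem_span t _ ?_
    calc (p α).totalDegree
        ≤ (∏ i, (g i) ^ (α i : ℕ)).totalDegree + (D ^ (M - ∑ i, (α i : ℕ))).totalDegree :=
          totalDegree_mul _ _
      _ ≤ (∑ i, ((g i) ^ (α i : ℕ)).totalDegree) + (M - ∑ i, (α i : ℕ)) * D.totalDegree :=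
          Nat.add_le_add (totalDegree_finset_prod _ _) (totalDegree_pow _ _)
      _ ≤ (∑ i, (α i : ℕ) * d) + (M - ∑ i, (α i : ℕ)) * d := by
          refine Nat.add_le_add (Finset.sum_le_sum fun i _ => ?_)
            (Nat.mul_le_mul_left _ hdD)
          exact le_trans (totalDegree_pow _ _) (Nat.mul_le_mul_left _ (hdg i))
      _ = ((∑ i, (α i : ℕ)) + (M - ∑ i, (α i : ℕ))) * d := by
          rw [Nat.add_mul, Finset.sum_mul]
      _ = M * d := by rw [Nat.add_sub_cancel' (sumle α)]
      _ = t := by rw [ht, Nat.mul_comm]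
  have li4 : LinearIndependent K (fun α => (⟨p α, hmem α⟩ : W)) :=
    LinearIndependent.of_comp W.subtype (by exact li3)
  have hcard2 : (Fintype.card (Fin (m+1) → Fin (N+1)) : Cardinal)
      ≤ (Fintype.card (ι → Fin (t+1)) : Cardinal) := by
    calc (Fintype.card (Fin (m+1) → Fin (N+1)) : Cardinal)
        = Cardinal.mk (Fin (m+1) → Fin (N+1)) := (Cardinal.mk_fintype _).symm
      _ ≤ Module.rank K W := li4.cardinal_le_rank
      _ ≤ Cardinal.mk (Set.range w) := rank_span_le _
      _ ≤ Cardinal.mk (ι → Fin (t+1)) := Cardinal.mk_range_le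
      _ = (Fintype.card (ι → Fin (t+1)) : Cardinal) := Cardinal.mk_fintype _
  rw [Nat.cast_le, Fintype.card_fun, Fintype.card_fun] at hcard2
  simp only [Fintype.card_fin, hcard] at hcard2
  have h1 : t + 1 ≤ c * (N + 1) := by
    have h7 : t = d * (m+1) * N := by rw [ht, hM]; ring
    rw [h7, hc]; nlinarith
  have h2 : (t+1)^m ≤ (c * (N+1))^m := Nat.pow_le_pow_left h1 m
  have h3 : (c * (N+1))^m = N * (N+1)^m := by rw [Nat.mul_pow, ← hN]
  have hNpos : 0 < (N+1)^m := pow_pos (Nat.succ_pos N) m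
  have h8 : (N+1)^m * (N+1) ≤ (N+1)^m * N := by
    calc (N+1)^m * (N+1) = (N+1)^(m+1) := (pow_succ _ _).symm
      _ ≤ (t+1)^m := hcard2
      _ ≤ (c*(N+1))^m := h2
      _ = N * (N+1)^m := h3
      _ = (N+1)^m * N := Nat.mul_comm _ _
  have h9 := Nat.le_of_mul_le_mul_left h8 hNpos
  omega

lemma trdeg_le_of_algEquiv {K L L' : Type} [CommRing K] [CommRing L] [CommRing L']
    [Algebra K L] [Algebra K L'] (e : L ≃ₐ[K] L') : trdeg K L ≤ trdeg K L' := by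
  refine ciSup_le' fun s => ?_
  have h1 : AlgebraicIndependent K ((e : L →ₐ[K] L') ∘ ((↑) : s.1 → L)) :=
    s.2.map' e.injective
  have h2 : AlgebraicIndependent K ((↑) : (e '' s.1 : Set L') → L') :=
    h1.to_subtype_range' (by rw [Set.range_comp]; simp)
  have h3 : Cardinal.mk s.1 = Cardinal.mk (e '' s.1 : Set L') :=
    (Cardinal.mk_image_eq e.injective).symm
  rw [h3]
  exact le_ciSup (Cardinal.bddAbove_range _) (⟨(e '' s.1 : Set L'), h2⟩ :
    {t : Set L' // AlgebraicIndependent K ((↑) : t → L')})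

lemma trdeg_eq_of_algEquiv {K L L' : Type} [CommRing K] [CommRing L] [CommRing L']
    [Algebra K L] [Algebra K L'] (e : L ≃ₐ[K] L') : trdeg K L = trdeg K L' :=
  le_antisymm (trdeg_le_of_algEquiv e) (trdeg_le_of_algEquiv e.symm)

lemma trdeg_fractionRing (K : Type) [Field K] (ι : Type) [Fintype ι] :
    trdeg K (FractionRing (MvPolynomial ι K)) = (Fintype.card ι : Cardinal) := by
  set L := FractionRing (MvPolynomial ι K)
  have hx : AlgebraicIndependent K (fun i : ι => algebraMap (MvPolynomial ι K) L (X i)) := by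
    exact (MvPolynomial.algebraicIndependent_X ι K).map'
      (f := IsScalarTower.toAlgHom K (MvPolynomial ι K) L)
      (IsFractionRing.injective (MvPolynomial ι K) L)
  have hxinj : Function.Injective (fun i : ι => algebraMap (MvPolynomial ι K) L (X i)) :=
    fun i j h => MvPolynomial.X_injective (IsFractionRing.injective (MvPolynomial ι K) L h)
  apply le_antisymm
  · refine ciSup_le' fun s => ?_
    by_contra hlt
    push_neg at hlt
    have h1 : ((Fintype.card ι + 1 : ℕ) : Cardinal) ≤ Cardinal.mk s.1 := by
      rw [Nat.cast_add, Nat.cast_one]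
      exact (Cardinal.add_one_le_succ _).trans (Order.succ_le_of_lt hlt)
    rw [← Cardinal.mk_fin, Cardinal.le_def] at h1
    obtain ⟨emb⟩ := h1
    exact not_algIndep_of_card K ι (Fintype.card ι) rfl L
      (fun i => ((emb i : s.1) : L)) (s.2.comp emb emb.injective)
  · have hr : AlgebraicIndependent K
        ((↑) : Set.range (fun i : ι => algebraMap (MvPolynomial ι K) L (X i)) → L) :=
      hx.coe_range
    have h2 := le_ciSup (Cardinal.bddAbove_range
      (fun s : {s : Set L // AlgebraicIndependent K ((↑) : s → L)} => Cardinal.mk s.1))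
      ⟨_, hr⟩
    refine le_trans ?_ h2
    rw [Cardinal.mk_range_eq _ hxinj, Cardinal.mk_fintype]

open SimpleGraph in
lemma tree_indep_family (K : Type) [Field K] {n : ℕ} (T : SimpleGraph (Fin n))
    (hconn : T.Connected) (hacyc : T.IsAcyclic) :
    ∃ O : Set (Fin n × Fin n), (∀ o ∈ O, T.Adj o.1 o.2) ∧
      (∀ i j, T.Adj i j → ((i,j) ∈ O ∧ (j,i) ∉ O) ∨ ((j,i) ∈ O ∧ (i,j) ∉ O)) ∧
      AlgebraicIndependent K (fun o : O =>
        (X (Sum.inl o.1.1) * X (Sum.inr o.1.2) - X (Sum.inl o.1.2) * X (Sum.inr o.1.1) :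
          MvPolynomial (Fin n ⊕ Fin n) K)) := by
  classical
  have : Nonempty (Fin n) := hconn.nonempty
  set r : Fin n := Classical.arbitrary (Fin n) with hr
  let pth : ∀ v : Fin n, T.Path r v := fun v => ((hconn.preconnected r v).some).toPath
  have keyA : ∀ i j (h : T.Adj i j), j ∉ (pth i).1.support →
      (pth j).1 = (pth i).1.concat h := by
    intro i j h hj
    have hp : ((pth i).1.concat h).IsPath := by
      rw [← Walk.isPath_reverse_iff, Walk.reverse_concat]
      exact ((pth i).2.reverse).cons
        (by simpa [Walk.support_reverse] using hj)
    exact congrArg Subtype.val (hacyc.path_unique (pth j) ⟨(pth i).1.concat h, hp⟩)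
  have keyB : ∀ i j, T.Adj i j → j ∈ (pth i).1.support → i ∉ (pth j).1.support := by
    intro i j h hj hi
    have hq1 : ((pth i).1.takeUntil j hj).IsPath := (pth i).2.takeUntil hj
    have hpj : (pth j).1 = (pth i).1.takeUntil j hj :=
      congrArg Subtype.val (hacyc.path_unique (pth j) ⟨_, hq1⟩)
    rw [hpj] at hi
    have hnd := (pth i).2.support_nodup
    have hspec := ((pth i).1.take_spec hj)
    rw [← hspec, Walk.support_append] at hnd
    have hdisj := List.disjoint_of_nodup_append hnd
    have hi2 : i ∈ ((pth i).1.dropUntil j hj).support.tail := by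
      have hend := Walk.end_mem_support ((pth i).1.dropUntil j hj)
      rw [Walk.support_eq_cons] at hend
      rcases List.mem_cons.1 hend with h1 | h1
      · exact absurd h1.symm h.ne'
      · exact h1
    exact hdisj hi hi2
  set O : Set (Fin n × Fin n) := {o | T.Adj o.1 o.2 ∧ o.2 ∉ (pth o.1).1.support} with hO
  have hOadj : ∀ o ∈ O, T.Adj o.1 o.2 := fun o ho => ho.1
  have hdich : ∀ i j, T.Adj i j → ((i,j) ∈ O ∧ (j,i) ∉ O) ∨ ((j,i) ∈ O ∧ (i,j) ∉ O) := by
    intro i j h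
    by_cases hj : j ∈ (pth i).1.support
    · right
      refine ⟨⟨h.symm, keyB i j h hj⟩, ?_⟩
      intro hij
      exact hij.2 hj
    · left
      refine ⟨⟨h, hj⟩, ?_⟩
      intro hji
      have hisup : i ∈ (pth j).1.support := by
        rw [keyA i j h hj, Walk.support_concat]
        simp only [List.concat_eq_append, List.mem_append, List.mem_singleton]
        exact Or.inl (Walk.end_mem_support _)
      exact hji.2 hisup
  have huniq : ∀ i i' j, (i,j) ∈ O → (i',j) ∈ O → i = i' := by
    intro i i' j ho ho'
    have e1 := keyA i j ho.1 ho.2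
    have e2 := keyA i' j ho'.1 ho'.2
    have e3 : (pth i).1.concat ho.1 = (pth i').1.concat ho'.1 := e1 ▸ e2
    have e4 := congrArg Walk.reverse e3
    rw [Walk.reverse_concat, Walk.reverse_concat] at e4
    have e5 := congrArg (fun w => w.getVert 1) e4
    simpa [Walk.getVert_cons_succ, Walk.getVert_zero] using e5
  set P : Fin n → MvPolynomial (Fin n) K := fun v => ∑ u ∈ (pth v).1.support.toFinset, X u with hP
  have hPrel : ∀ i j, (i,j) ∈ O → P j = P i + X j := by
    intro i j ho
    have hsup : (pth j).1.support = (pth i).1.support ++ [j] := by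
      rw [keyA i j ho.1 ho.2, Walk.support_concat]
    have hjni : j ∉ (pth i).1.support.toFinset := by
      simpa using ho.2
    rw [hP]
    simp only
    rw [hsup]
    rw [List.toFinset_append]
    simp only [List.toFinset_cons, List.toFinset_nil, insert_empty_eq]
    rw [Finset.union_comm, ← Finset.insert_eq, Finset.sum_insert hjni, add_comm]
  set ψ : MvPolynomial (Fin n ⊕ Fin n) K →ₐ[K] MvPolynomial (Fin n) K :=
    aeval (Sum.elim P fun _ => (-1 : MvPolynomial (Fin n) K)) with hψdef
  set b : O → MvPolynomial (Fin n ⊕ Fin n) K := fun o =>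
    X (Sum.inl o.1.1) * X (Sum.inr o.1.2) - X (Sum.inl o.1.2) * X (Sum.inr o.1.1) with hb
  have hψb : (⇑ψ ∘ b) = fun o : O => (X o.1.2 : MvPolynomial (Fin n) K) := by
    funext o
    obtain ⟨⟨i, j⟩, ho⟩ := o
    simp only [Function.comp_apply, hb, hψdef, map_sub, map_mul, aeval_X,
      Sum.elim_inl, Sum.elim_inr]
    rw [hPrel i j ho]
    ring
  have hcinj : Function.Injective (fun o : O => o.1.2) := by
    intro o o' hoo
    have hoo' : (o.1).2 = (o'.1).2 := hoo
    have h1 := huniq o.1.1 o'.1.1 o.1.2 (by exact o.2) (by rw [hoo']; exact o'.2)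
    exact Subtype.ext (Prod.ext h1 hoo')
  have hXind : AlgebraicIndependent K (fun o : O => (X o.1.2 : MvPolynomial (Fin n) K)) :=
    (MvPolynomial.algebraicIndependent_X (Fin n) K).comp _ hcinj
  have hbind : AlgebraicIndependent K b := by
    apply AlgebraicIndependent.of_comp ψ
    rw [hψb]
    exact hXind
  exact ⟨O, hOadj, hdich, hbind⟩

end Aux

/-- If `T` is a tree (connected and acyclic), then the analytic spread of its binomial edge
ideal equals its number of edges. -/
theorem spread_tree
    (K : Type) [Field K] [Infinite K] (n : ℕ) (T : SimpleGraph (Fin n))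
    (hconn : T.Connected) (hacyc : T.IsAcyclic) :
    spread K T = (T.edgeSet.ncard : Cardinal) := by
  classical
  obtain ⟨O, hOadj, hdich, hbind⟩ := tree_indep_family K T hconn hacyc
  set A := MvPolynomial (Fin n ⊕ Fin n) K with hA
  set Lb := FractionRing (MvPolynomial (Fin n ⊕ Fin n) K) with hLb
  set g : O → FractionRing (MvPolynomial (Fin n ⊕ Fin n) K) := fun o =>
    algebraMap (MvPolynomial (Fin n ⊕ Fin n) K) (FractionRing (MvPolynomial (Fin n ⊕ Fin n) K))
      (X (Sum.inl o.1.1) * X (Sum.inr o.1.2) - X (Sum.inl o.1.2) * X (Sum.inr o.1.1)) with hgdef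
  have hgind : AlgebraicIndependent K g := by
    exact hbind.map'
      (f := IsScalarTower.toAlgHom K (MvPolynomial (Fin n ⊕ Fin n) K)
        (FractionRing (MvPolynomial (Fin n ⊕ Fin n) K)))
      (IsFractionRing.injective _ _)
  -- the two adjoins agree
  have hadj : IntermediateField.adjoin K (edgeBinoms K T)
      = IntermediateField.adjoin K (Set.range g) := by
    apply le_antisymm
    · rw [IntermediateField.adjoin_le_iff]
      rintro z ⟨i, j, hij, rfl⟩
      rcases hdich i j hij with ⟨ho, -⟩ | ⟨ho, -⟩
      · exact IntermediateField.subset_adjoin _ _ ⟨⟨(i,j), ho⟩, rfl⟩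
      · have hz : algebraMap (MvPolynomial (Fin n ⊕ Fin n) K)
            (FractionRing (MvPolynomial (Fin n ⊕ Fin n) K))
            (X (Sum.inl i) * X (Sum.inr j) - X (Sum.inl j) * X (Sum.inr i))
            = - g ⟨(j,i), ho⟩ := by
          rw [hgdef]
          simp only
          rw [← map_neg]
          ring_nf
        rw [hz]
        exact neg_mem (IntermediateField.subset_adjoin _ _ ⟨⟨(j,i), ho⟩, rfl⟩)
    · rw [IntermediateField.adjoin_le_iff]
      rintro z ⟨o, rfl⟩
      exact IntermediateField.subset_adjoin _ _ ⟨o.1.1, o.1.2, hOadj o o.2, rfl⟩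
  haveI : Fintype O := Fintype.ofFinite _
  have heq1 : spread K T = trdeg K (FractionRing (MvPolynomial O K)) := by
    rw [spread, hadj]
    exact (trdeg_eq_of_algEquiv hgind.aevalEquivField).symm
  rw [heq1, trdeg_fractionRing]
  -- Fintype.card O = edgeSet.ncard
  congr 1
  have hbij : Function.Bijective (fun o : O => (⟨s(o.1.1, o.1.2), hOadj o o.2⟩ : T.edgeSet)) := by
    constructor
    · intro o o' hoo
      have h1 : s(o.1.1, o.1.2) = s(o'.1.1, o'.1.2) := congrArg Subtype.val hoo
      rw [Sym2.eq_iff] at h1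
      rcases h1 with ⟨h2, h3⟩ | ⟨h2, h3⟩
      · exact Subtype.ext (Prod.ext h2 h3)
      · exfalso
        have ho : (o.1.1, o.1.2) ∈ O := by exact o.2
        have ho' : (o'.1.1, o'.1.2) ∈ O := by exact o'.2
        rw [← h2, ← h3] at ho'
        rcases hdich o.1.1 o.1.2 (hOadj o o.2) with ⟨-, hn⟩ | ⟨-, hn⟩
        · exact hn ho'
        · exact hn ho
    · rintro ⟨e, he⟩
      induction e with
      | h i j =>
        have hij : T.Adj i j := he
        rcases hdich i j hij with ⟨ho, -⟩ | ⟨ho, -⟩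
        · exact ⟨⟨(i,j), ho⟩, rfl⟩
        · exact ⟨⟨(j,i), ho⟩, Subtype.ext (Sym2.eq_swap)⟩
  calc (Fintype.card O : ℕ) = Nat.card O := (Nat.card_eq_fintype_card).symm
    _ = Nat.card T.edgeSet := Nat.card_congr (Equiv.ofBijective _ hbij)
    _ = T.edgeSet.ncard := Nat.card_coe_set_eq _
end

section
/- Let F_1, ..., F_s be algebraically independent elements of S = K[x_1,...,x_n,y_1,...,y_n], suppose the variables x_n, y_n do not appear in any F_i, and let L = x_n(x_i − y_i) for some i < n with x_i ≠ y_i as variables. Then F_1, ..., F_s, L are algebraically independent over K. -/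
open MvPolynomial

/-- `Option α ⊕ β ≃ Option (α ⊕ β)`. -/
def optSumEquiv (α β : Type*) : Option α ⊕ β ≃ Option (α ⊕ β) where
  toFun x := match x with
    | .inl none => none
    | .inl (some a) => some (.inl a)
    | .inr b => some (.inr b)
  invFun x := match x with
    | none => .inl none
    | some (.inl a) => .inl (some a)
    | some (.inr b) => .inr b
  left_inv := by rintro ((_|a)|b) <;> rfl
  right_inv := by rintro (_|(a|b)) <;> rfl

/-- Key step in the leaf-addition argument: if `F₁,…,F_s ∈ S = K[x₀,…,xₙ,y₀,…,yₙ]` are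
algebraically independent over `K` and none of them involves the variables `xₙ` or `yₙ`, then
for any `i < n` the polynomials `F₁,…,F_s, xₙ(xᵢ − yᵢ)` are algebraically independent over
`K`.  (The `Sum.inl` variables are the `x`s and the `Sum.inr` variables the `y`s.) -/
theorem algebraicIndependent_snoc_last_times_diff
    (K : Type) [Field K] [Infinite K] (n s : ℕ)
    (F : Fin s → MvPolynomial (Fin (n + 1) ⊕ Fin (n + 1)) K)
    (hF : AlgebraicIndependent K F)
    (hx : ∀ k, Sum.inl (Fin.last n) ∉ (F k).vars)
    (hy : ∀ k, Sum.inr (Fin.last n) ∉ (F k).vars)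
    (i : Fin n)
    (L : MvPolynomial (Fin (n + 1) ⊕ Fin (n + 1)) K)
    (hL : L = X (Sum.inl (Fin.last n)) *
      (X (Sum.inl (Fin.castSucc i)) - X (Sum.inr (Fin.castSucc i)))) :
    AlgebraicIndependent K (Fin.snoc F L) := by
  classical
  have key : ¬ IsAlgebraic (Algebra.adjoin K (Set.range F)) L := by
    intro halg
    obtain ⟨p, hp0, hpe⟩ := halg
    -- set up the isomorphism isolating the variable `xₙ`
    let e : (Fin (n + 1) ⊕ Fin (n + 1)) ≃ Option (Fin n ⊕ Fin (n + 1)) :=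
      (Equiv.sumCongr finSuccEquivLast (Equiv.refl _)).trans (optSumEquiv _ _)
    have he_last : e (Sum.inl (Fin.last n)) = none := by
      simp [e, optSumEquiv, Equiv.sumCongr_apply]
    have he_cast : ∀ j : Fin n, e (Sum.inl (Fin.castSucc j)) = some (Sum.inl j) := by
      intro j; simp [e, optSumEquiv, Equiv.sumCongr_apply]
    have he_inr : ∀ j, e (Sum.inr j) = some (Sum.inr j) := fun j => by
      simp [e, optSumEquiv, Equiv.sumCongr_apply]
    let φ : MvPolynomial (Fin (n + 1) ⊕ Fin (n + 1)) K ≃ₐ[K]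
        Polynomial (MvPolynomial (Fin n ⊕ Fin (n + 1)) K) :=
      (renameEquiv K e).trans (optionEquivLeft K (Fin n ⊕ Fin (n + 1)))
    set a : MvPolynomial (Fin n ⊕ Fin (n + 1)) K :=
      X (Sum.inl i) - X (Sum.inr (Fin.castSucc i)) with ha
    have ha0 : a ≠ 0 := by
      intro h
      have := congrArg
        (fun q => MvPolynomial.coeff (Finsupp.single (Sum.inl i : Fin n ⊕ Fin (n + 1)) 1) q) h
      simp [ha, coeff_X', Finsupp.single_eq_single_iff] at this
    have hφL : φ L = Polynomial.X * Polynomial.C a := by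
      simp only [hL, φ, AlgEquiv.trans_apply, renameEquiv_apply, map_mul, map_sub, rename_X,
        he_last, he_cast, he_inr, optionEquivLeft_X_none, optionEquivLeft_X_some]
      rw [ha, map_sub]
    -- anything supported away from `xₙ` maps to a constant polynomial
    have hconst : ∀ q ∈ supported K {v : Fin (n + 1) ⊕ Fin (n + 1) | v ≠ Sum.inl (Fin.last n)},
        ∃ b, φ q = Polynomial.C b := by
      intro q hq
      have hq' : q ∈ Algebra.adjoin K
          (X '' {v : Fin (n + 1) ⊕ Fin (n + 1) | v ≠ Sum.inl (Fin.last n)}) := hq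
      clear hq
      induction hq' using Algebra.adjoin_induction with
      | mem x hxm =>
        obtain ⟨v, hv, rfl⟩ := hxm
        obtain ⟨w, hw⟩ : ∃ w, e v = some w := by
          rcases v with j | j
          · rcases Fin.eq_castSucc_or_eq_last j with ⟨j', rfl⟩ | rfl
            · exact ⟨_, he_cast j'⟩
            · exact absurd rfl hv
          · exact ⟨_, he_inr j⟩
        exact ⟨X w, by simp [φ, hw, optionEquivLeft_X_some]⟩
      | algebraMap r =>
        exact ⟨MvPolynomial.C r, by
          simp [φ, algebraMap_eq, rename_C, optionEquivLeft_C]⟩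
      | add x y _ _ hx' hy' =>
        obtain ⟨b1, hb1⟩ := hx'; obtain ⟨b2, hb2⟩ := hy'
        exact ⟨b1 + b2, by simp [map_add, hb1, hb2]⟩
      | mul x y _ _ hx' hy' =>
        obtain ⟨b1, hb1⟩ := hx'; obtain ⟨b2, hb2⟩ := hy'
        exact ⟨b1 * b2, by simp [map_mul, hb1, hb2]⟩
    -- the coefficients of `p` lie in that supported subalgebra
    have hadj : Algebra.adjoin K (Set.range F) ≤
        supported K {v : Fin (n + 1) ⊕ Fin (n + 1) | v ≠ Sum.inl (Fin.last n)} := by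
      apply Algebra.adjoin_le
      rintro _ ⟨k, rfl⟩
      simp only [SetLike.mem_coe, mem_supported]
      intro v hv
      rintro rfl
      exact hx k hv
    have hb : ∀ j : ℕ, ∃ b, φ (algebraMap (Algebra.adjoin K (Set.range F))
        (MvPolynomial (Fin (n + 1) ⊕ Fin (n + 1)) K) (p.coeff j))
        = Polynomial.C b := fun j =>
      hconst _ (hadj (p.coeff j).2)
    choose b hbspec using hb
    -- expand the algebraic relation
    have hsum : (0 : Polynomial (MvPolynomial (Fin n ⊕ Fin (n + 1)) K)) =
        ∑ j ∈ p.support, Polynomial.C (b j * a ^ j) * Polynomial.X ^ j := by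
      have h1 : φ (Polynomial.aeval L p) = 0 := by rw [hpe]; simp
      rw [Polynomial.aeval_def, Polynomial.eval₂_eq_sum, Polynomial.sum] at h1
      rw [← h1, map_sum]
      refine Finset.sum_congr rfl fun j _ => ?_
      rw [map_mul, map_pow, hφL, hbspec j, mul_pow, ← Polynomial.C_pow, map_mul]
      ring
    -- compare coefficients
    have hbz : ∀ j ∈ p.support, b j * a ^ j = 0 := by
      intro j hj
      have := congrArg (fun q => Polynomial.coeff q j) hsum
      simp only [Polynomial.coeff_zero, Polynomial.finset_sum_coeff,
        Polynomial.coeff_C_mul, Polynomial.coeff_X_pow] at this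
      rw [Finset.sum_eq_single j (fun k _ hk => by simp [Ne.symm hk]) (fun h => absurd hj h)]
        at this
      simpa using this.symm
    apply hp0
    apply Polynomial.ext
    intro j
    by_cases hj : j ∈ p.support
    · have hz := hbz j hj
      have hbj : b j = 0 := by
        rcases mul_eq_zero.1 hz with h | h
        · exact h
        · exact absurd (pow_eq_zero_iff'.mp h).1 ha0
      have hφ0 : φ (algebraMap (Algebra.adjoin K (Set.range F))
          (MvPolynomial (Fin (n + 1) ⊕ Fin (n + 1)) K) (p.coeff j)) = 0 := by
        rw [hbspec j, hbj, map_zero]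
      have h0 : algebraMap (Algebra.adjoin K (Set.range F))
          (MvPolynomial (Fin (n + 1) ⊕ Fin (n + 1)) K) (p.coeff j) = 0 := by
        have := congrArg φ.symm hφ0
        simpa using this
      simpa using h0
    · simpa using Polynomial.notMem_support_iff.1 hj
  have hopt : AlgebraicIndependent K (fun o : Option (Fin s) => o.elim L F) :=
    (hF.option_iff_transcendental L).2 key
  have h2 := hopt.comp finSuccEquivLast finSuccEquivLast.injective
  have heq : Fin.snoc F L = (fun o : Option (Fin s) => o.elim L F) ∘ finSuccEquivLast := by
    funext j
    refine Fin.lastCases ?_ (fun k => ?_) j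
    · simp [Fin.snoc_last]
    · simp [Fin.snoc_castSucc]
  rw [heq]
  exact h2
end
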